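/- arXiv:1201.5933 — 9 statements merged into one kernel-verified Lean document; each statement's English description precedes it below -/
import Mathlib

section
/- For natural numbers m, n with 2m ≤ n, the (m+1)×(m+1) rational matrix M with entries M_{i,j} = 1/(n-i-j)! for 0 ≤ i,j ≤ m is invertible. -/
open Polynomial

/-- For `2m ≤ n`, the `(m+1) × (m+1)` rational matrix with entries
`1/(n-i-j)!` is invertible. -/
theorem factorial_hankel_matrix_invertible (m n : ℕ) (h : 2 * m ≤ n) :
    IsUnit (Matrix.of fun i j : Fin (m + 1) =>
      (1 : ℚ) / ((n - (i : ℕ) - (j : ℕ)).factorial : ℚ)) := by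
  rw [Matrix.isUnit_iff_isUnit_det, isUnit_iff_ne_zero]
  have key : ∀ i j : Fin (m + 1),
      (1 : ℚ) / ((n - (i : ℕ) - (j : ℕ)).factorial : ℚ) =
      (1 / ((n - (i : ℕ)).factorial : ℚ)) *
        ((descPochhammer ℚ (j : ℕ)).eval (((n - (i : ℕ) : ℕ) : ℚ))) := by
    intro i j
    have hi : (i : ℕ) ≤ m := i.is_le
    have hj : (j : ℕ) ≤ n - (i : ℕ) := by omega
    rw [descPochhammer_eval_eq_descFactorial]
    have hfac := Nat.factorial_mul_descFactorial hj
    have h1 : ((n - (i:ℕ)).factorial : ℚ) ≠ 0 := Nat.cast_ne_zero.mpr (Nat.factorial_ne_zero _)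
    have h2 : ((n - (i:ℕ) - (j:ℕ)).factorial : ℚ) ≠ 0 :=
      Nat.cast_ne_zero.mpr (Nat.factorial_ne_zero _)
    field_simp
    rw [mul_comm]; exact_mod_cast ((mul_comm _ _).trans hfac).symm
  have hmat : (Matrix.of fun i j : Fin (m + 1) =>
      (1 : ℚ) / ((n - (i : ℕ) - (j : ℕ)).factorial : ℚ)) =
      Matrix.of fun i j : Fin (m + 1) =>
        (1 / ((n - (i : ℕ)).factorial : ℚ)) *
          (Matrix.of fun i j : Fin (m + 1) =>
            ((descPochhammer ℚ (j : ℕ)).eval (((n - (i : ℕ) : ℕ) : ℚ)))) i j := by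
    ext i j
    exact key i j
  rw [hmat, Matrix.det_mul_column]
  have hvdm := Matrix.det_eval_matrixOfPolynomials_eq_det_vandermonde
      (fun i : Fin (m + 1) => (((n - (i : ℕ) : ℕ) : ℚ)))
      (fun j : Fin (m + 1) => descPochhammer ℚ (j : ℕ))
      (fun j => descPochhammer_natDegree ℚ (j : ℕ))
      (fun j => monic_descPochhammer ℚ (j : ℕ))
  rw [← hvdm]
  refine mul_ne_zero ?_ ?_
  · refine Finset.prod_ne_zero_iff.mpr fun i _ => ?_
    exact one_div_ne_zero (Nat.cast_ne_zero.mpr (Nat.factorial_ne_zero _))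
  · rw [Matrix.det_vandermonde_ne_zero_iff]
    intro i j hij
    have hi : (i : ℕ) ≤ m := i.is_le
    have hj : (j : ℕ) ≤ m := j.is_le
    have : n - (i : ℕ) = n - (j : ℕ) := by simp only [] at hij; exact_mod_cast hij
    have : (i : ℕ) = (j : ℕ) := by omega
    exact Fin.ext this
end

section
/- For any natural number m ≥ 1, let A be the m×m rational matrix with entries A_{i,j} = 1/(2m-i-j)! for 0 ≤ i,j ≤ m-1, and let v be the column vector (1/m!, 1/(m-1)!, …, 1/1!)^T in ℚ^m. Then A is invertible and v^T A^{-1} v = 1 - (-1)^m. -/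
open Finset

section helpers

lemma alt_pascal (n : ℕ) (g : ℕ → ℚ) :
    ∑ j ∈ Finset.range (n+2), (-1:ℚ)^j * ((n+1).choose j : ℚ) * g j
      = ∑ j ∈ Finset.range (n+1), (-1:ℚ)^j * (n.choose j : ℚ) * (g j - g (j+1)) := by
  have hT2 : ∑ j ∈ Finset.range (n+1), (-1:ℚ)^j * (n.choose (j+1) : ℚ) * g (j+1)
      = g 0 - ∑ j ∈ Finset.range (n+1), (-1:ℚ)^j * (n.choose j : ℚ) * g j := by
    have h1 : ∑ j ∈ Finset.range (n+1), (-1:ℚ)^j * (n.choose j : ℚ) * g j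
        = (∑ j ∈ Finset.range n, (-1:ℚ)^(j+1) * (n.choose (j+1) : ℚ) * g (j+1))
          + (-1:ℚ)^0 * (n.choose 0 : ℚ) * g 0 := Finset.sum_range_succ' _ n
    have h2 : ∑ j ∈ Finset.range (n+1), (-1:ℚ)^j * (n.choose (j+1) : ℚ) * g (j+1)
        = (∑ j ∈ Finset.range n, (-1:ℚ)^j * (n.choose (j+1) : ℚ) * g (j+1))
          + (-1:ℚ)^n * (n.choose (n+1) : ℚ) * g (n+1) := Finset.sum_range_succ _ n
    have h3 : ∀ j ∈ Finset.range n, (-1:ℚ)^(j+1) * (n.choose (j+1) : ℚ) * g (j+1)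
        = -((-1:ℚ)^j * (n.choose (j+1) : ℚ) * g (j+1)) := by
      intro j _; ring
    rw [h2, Nat.choose_succ_self, h1, Finset.sum_congr rfl h3, Finset.sum_neg_distrib]
    simp [Nat.choose_zero_right]
  have h4 : ∑ j ∈ Finset.range (n+2), (-1:ℚ)^j * ((n+1).choose j : ℚ) * g j
      = (∑ j ∈ Finset.range (n+1), (-1:ℚ)^(j+1) * ((n+1).choose (j+1) : ℚ) * g (j+1))
        + (-1:ℚ)^0 * ((n+1).choose 0 : ℚ) * g 0 := Finset.sum_range_succ' _ (n+1)
  have h5 : ∀ j ∈ Finset.range (n+1), (-1:ℚ)^(j+1) * ((n+1).choose (j+1) : ℚ) * g (j+1)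
      = -((-1:ℚ)^j * (n.choose j : ℚ) * g (j+1)) - (-1:ℚ)^j * (n.choose (j+1) : ℚ) * g (j+1) := by
    intro j _
    rw [Nat.choose_succ_succ]
    push_cast
    ring
  rw [h4, Finset.sum_congr rfl h5, Finset.sum_sub_distrib, Finset.sum_neg_distrib, hT2]
  have h6 : ∀ j ∈ Finset.range (n+1), (-1:ℚ)^j * (n.choose j : ℚ) * (g j - g (j+1))
      = (-1:ℚ)^j * (n.choose j : ℚ) * g j - (-1:ℚ)^j * (n.choose j : ℚ) * g (j+1) := by
    intro j _; ring
  rw [Finset.sum_congr rfl h6, Finset.sum_sub_distrib]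
  simp [Nat.choose_zero_right]
  ring

lemma prod_sub_minus (e : ℕ) (w : ℚ) :
    (∏ s ∈ Finset.range (e+1), (w + s)) - (∏ s ∈ Finset.range (e+1), ((w-1) + s))
      = (e+1) * ∏ s ∈ Finset.range e, (w + s) := by
  rw [Finset.prod_range_succ]
  rw [Finset.prod_range_succ' (fun s => (w-1) + (s:ℚ)) e]
  have : ∀ s ∈ Finset.range e, (w - 1 + ((s:ℕ)+1 : ℕ)) = w + s := by
    intro s _; push_cast; ring
  rw [Finset.prod_congr rfl this]
  push_cast; ring

lemma prod_sub_plus (e : ℕ) (w : ℚ) :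
    (∏ s ∈ Finset.range (e+1), (w + s)) - (∏ s ∈ Finset.range (e+1), ((w+1) + s))
      = -(e+1) * ∏ s ∈ Finset.range e, ((w+1) + s) := by
  rw [Finset.prod_range_succ' (fun s => w + (s:ℚ)) e]
  rw [Finset.prod_range_succ]
  have : ∀ s ∈ Finset.range e, (w + ((s:ℕ)+1 : ℕ)) = (w+1) + s := by
    intro s _; push_cast; ring
  rw [Finset.prod_congr rfl this]
  push_cast; ring

lemma fact_ratio (a c : ℕ) :
    (((a+c).factorial : ℚ)) = (a.factorial : ℚ) * ∏ s ∈ Finset.range c, ((a:ℚ) + 1 + s) := by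
  induction c with
  | zero => simp
  | succ e ih =>
    have : a + (e+1) = (a+e) + 1 := by ring
    rw [this, Nat.factorial_succ, Finset.prod_range_succ]
    push_cast
    rw [ih]
    push_cast
    ring

lemma alt_prod_minus (n : ℕ) : ∀ d ≤ n, ∀ z : ℚ,
    ∑ j ∈ Finset.range (n+1), (-1:ℚ)^j * (n.choose j : ℚ) * ∏ s ∈ Finset.range d, (z + s - j)
      = if d = n then (n.factorial : ℚ) else 0 := by
  induction n with
  | zero =>
    intro d hd z
    interval_cases d
    simp
  | succ n ih =>
    intro d hd z
    rw [alt_pascal n (fun j => ∏ s ∈ Finset.range d, (z + s - j))]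
    match d with
    | 0 => simp
    | (e+1) =>
      have key : ∀ j ∈ Finset.range (n+1),
          (-1:ℚ)^j * (n.choose j : ℚ) *
            ((∏ s ∈ Finset.range (e+1), (z + s - j)) - ∏ s ∈ Finset.range (e+1), (z + s - (j+1:ℕ)))
          = (e+1) * ((-1:ℚ)^j * (n.choose j : ℚ) * ∏ s ∈ Finset.range e, (z - j + s)) := by
        intro j _
        have h1 : ∀ s ∈ Finset.range (e+1), (z + s - (j:ℕ)) = (z - j) + s := by
          intro s _; ring
        have h2 : ∀ s ∈ Finset.range (e+1), (z + s - ((j:ℕ)+1:ℕ)) = ((z - j) - 1) + s := by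
          intro s _; push_cast; ring
        rw [Finset.prod_congr rfl h1, Finset.prod_congr rfl h2, prod_sub_minus e (z - j)]
        ring
      rw [Finset.sum_congr rfl key, ← Finset.mul_sum]
      have h3 : ∀ j ∈ Finset.range (n+1),
          (-1:ℚ)^j * (n.choose j : ℚ) * ∏ s ∈ Finset.range e, ((z:ℚ) - j + s)
          = (-1:ℚ)^j * (n.choose j : ℚ) * ∏ s ∈ Finset.range e, ((z:ℚ) + s - j) := by
        intro j _
        congr 1
        exact Finset.prod_congr rfl (by intro s _; ring)
      rw [Finset.sum_congr rfl h3, ih e (by omega) z]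
      by_cases he : e = n
      · subst he
        rw [if_pos rfl, if_pos rfl, Nat.factorial_succ]
        push_cast; ring
      · rw [if_neg he, if_neg (by omega : ¬ (e + 1 = n + 1))]
        ring

lemma alt_prod_plus (n : ℕ) : ∀ d ≤ n, ∀ z : ℚ,
    ∑ j ∈ Finset.range (n+1), (-1:ℚ)^j * (n.choose j : ℚ) * ∏ s ∈ Finset.range d, (z + j + s)
      = if d = n then (-1:ℚ)^n * (n.factorial : ℚ) else 0 := by
  induction n with
  | zero =>
    intro d hd z
    interval_cases d
    simp
  | succ n ih =>
    intro d hd z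
    rw [alt_pascal n (fun j => ∏ s ∈ Finset.range d, (z + j + s))]
    match d with
    | 0 => simp
    | (e+1) =>
      have key : ∀ j ∈ Finset.range (n+1),
          (-1:ℚ)^j * (n.choose j : ℚ) *
            ((∏ s ∈ Finset.range (e+1), (z + j + s)) - ∏ s ∈ Finset.range (e+1), (z + ((j:ℕ)+1:ℕ) + s))
          = (-(e+1)) * ((-1:ℚ)^j * (n.choose j : ℚ) * ∏ s ∈ Finset.range e, ((z+1) + j + s)) := by
        intro j _
        have h1 : ∀ s ∈ Finset.range (e+1), (z + (j:ℕ) + s) = (z + j) + s := by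
          intro s _; ring
        have h2 : ∀ s ∈ Finset.range (e+1), (z + ((j:ℕ)+1:ℕ) + (s:ℕ)) = ((z + j) + 1) + s := by
          intro s _; push_cast; ring
        have h4 : ∀ s ∈ Finset.range e, ((z + (j:ℕ)) + 1 + (s:ℕ)) = (z+1) + j + s := by
          intro s _; push_cast; ring
        rw [Finset.prod_congr rfl h1, Finset.prod_congr rfl h2, prod_sub_plus e (z + j),
          Finset.prod_congr rfl h4]
        ring
      rw [Finset.sum_congr rfl key, ← Finset.mul_sum]
      rw [ih e (by omega) (z+1)]
      by_cases he : e = n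
      · subst he
        rw [if_pos rfl, if_pos rfl, Nat.factorial_succ]
        push_cast; ring
      · rw [if_neg he, if_neg (by omega : ¬ (e + 1 = n + 1))]
        ring

lemma beta_sum (n : ℕ) : ∀ x : ℚ, 0 < x →
    ∑ k ∈ Finset.range (n+1), (-1:ℚ)^k * (n.choose k : ℚ) / (x + k)
      = (n.factorial : ℚ) / ∏ k ∈ Finset.range (n+1), (x + k) := by
  induction n with
  | zero => intro x hx; simp
  | succ n ih =>
    intro x hx
    have hre : ∀ k ∈ Finset.range (n+2), (-1:ℚ)^k * ((n+1).choose k : ℚ) / (x + k)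
        = (-1:ℚ)^k * ((n+1).choose k : ℚ) * (1 / (x + k)) := by
      intro k _; ring
    rw [Finset.sum_congr rfl hre, alt_pascal n (fun k => 1 / (x + k))]
    have hsplit : ∀ k ∈ Finset.range (n+1),
        (-1:ℚ)^k * (n.choose k : ℚ) * (1/(x + k) - 1/(x + ((k:ℕ)+1:ℕ)))
        = (-1:ℚ)^k * (n.choose k : ℚ) / (x + k) - (-1:ℚ)^k * (n.choose k : ℚ) / ((x+1) + k) := by
      intro k _; push_cast; ring
    rw [Finset.sum_congr rfl hsplit, Finset.sum_sub_distrib, ih x hx, ih (x+1) (by linarith)]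
    have hpos : ∀ (y : ℚ), 0 < y → ∀ N, (0:ℚ) < ∏ k ∈ Finset.range N, (y + k) := by
      intro y hy N
      apply Finset.prod_pos
      intro k _
      have : (0:ℚ) ≤ k := Nat.cast_nonneg k
      linarith
    set a := ∏ k ∈ Finset.range (n+1), (x + k) with ha_def
    set b := ∏ k ∈ Finset.range (n+1), ((x+1) + k) with hb_def
    set Q := ∏ k ∈ Finset.range (n+2), (x + k) with hQ_def
    have hapos : (0:ℚ) < a := hpos x hx _
    have hbpos : (0:ℚ) < b := hpos (x+1) (by linarith) _
    have hQ1 : Q = a * (x + (n+1)) := by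
      rw [hQ_def, ha_def, Finset.prod_range_succ]; push_cast; ring
    have hQ2 : Q = x * b := by
      rw [hQ_def, hb_def, Finset.prod_range_succ' (fun k => x + (k:ℚ)) (n+1)]
      have : ∀ k ∈ Finset.range (n+1), (x + ((k:ℕ)+1:ℕ)) = (x+1) + k := by
        intro k _; push_cast; ring
      rw [Finset.prod_congr rfl this]
      push_cast; ring
    have ha_eq : a = x * b / (x + (n+1)) := by
      have hne : x + ((n:ℚ)+1) ≠ 0 := by positivity
      field_simp
      rw [← hQ1, hQ2]
    rw [hQ2, ha_eq, Nat.factorial_succ]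
    have hne : x + ((n:ℚ)+1) ≠ 0 := by positivity
    field_simp
    push_cast; ring

lemma pade (m N : ℕ) (hm : 1 ≤ m) (hN1 : m ≤ N) (hN2 : N ≤ 2*m) :
    ∑ j ∈ Finset.range (m+1),
      (-1:ℚ)^j * (m.choose j : ℚ) * ((2*m-j).factorial : ℚ) / ((N-j).factorial : ℚ)
    = if N = m then (m.factorial : ℚ) else 0 := by
  have key : ∀ j ∈ Finset.range (m+1),
      (-1:ℚ)^j * (m.choose j : ℚ) * ((2*m-j).factorial : ℚ) / ((N-j).factorial : ℚ)
      = (-1:ℚ)^j * (m.choose j : ℚ) * ∏ s ∈ Finset.range (2*m-N), (((N:ℚ)+1) + s - j) := by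
    intro j hj
    have hjm : j ≤ m := by simpa using Nat.lt_succ_iff.mp (Finset.mem_range.mp hj)
    have h1 : 2*m - j = (N - j) + (2*m - N) := by omega
    rw [h1, fact_ratio (N-j) (2*m-N)]
    have h2 : ∀ s ∈ Finset.range (2*m-N), (((N-j:ℕ):ℚ) + 1 + s) = ((N:ℚ)+1) + s - j := by
      intro s _
      have : ((N-j:ℕ):ℚ) = (N:ℚ) - j := by
        rw [Nat.cast_sub (by omega)]
      rw [this]; ring
    rw [Finset.prod_congr rfl h2]
    have hne : ((N-j).factorial : ℚ) ≠ 0 := by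
      exact_mod_cast (Nat.factorial_ne_zero _)
    field_simp
  rw [Finset.sum_congr rfl key, alt_prod_minus m (2*m-N) (by omega) ((N:ℚ)+1)]
  by_cases h : N = m
  · rw [if_pos (by omega), if_pos h]
  · rw [if_neg (by omega), if_neg h]

lemma S_zero (n p : ℕ) (hp : p < n) :
    ∑ k ∈ Finset.range (n+1),
      (-1:ℚ)^k * (n.choose k : ℚ) * ((n+k+1).factorial : ℚ) / ((k+p+2).factorial : ℚ) = 0 := by
  have key : ∀ k ∈ Finset.range (n+1),
      (-1:ℚ)^k * (n.choose k : ℚ) * ((n+k+1).factorial : ℚ) / ((k+p+2).factorial : ℚ)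
      = (-1:ℚ)^k * (n.choose k : ℚ) * ∏ s ∈ Finset.range (n-p-1), (((p:ℚ)+3) + k + s) := by
    intro k hk
    have h1 : n+k+1 = (k+p+2) + (n-p-1) := by omega
    rw [h1, fact_ratio (k+p+2) (n-p-1)]
    have h2 : ∀ s ∈ Finset.range (n-p-1), (((k+p+2:ℕ):ℚ) + 1 + s) = ((p:ℚ)+3) + k + s := by
      intro s _; push_cast; ring
    rw [Finset.prod_congr rfl h2]
    have hne : ((k+p+2).factorial : ℚ) ≠ 0 := by
      exact_mod_cast (Nat.factorial_ne_zero _)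
    field_simp
  rw [Finset.sum_congr rfl key, alt_prod_plus n (n-p-1) (by omega) ((p:ℚ)+3),
    if_neg (by omega : ¬ (n-p-1 = n))]

lemma S_diag (n : ℕ) :
    0 < ∑ k ∈ Finset.range (n+1),
      (-1:ℚ)^k * (n.choose k : ℚ) * ((n+k+1).factorial : ℚ) / ((k+n+2).factorial : ℚ) := by
  have key : ∀ k ∈ Finset.range (n+1),
      (-1:ℚ)^k * (n.choose k : ℚ) * ((n+k+1).factorial : ℚ) / ((k+n+2).factorial : ℚ)
      = (-1:ℚ)^k * (n.choose k : ℚ) / (((n:ℚ)+2) + k) := by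
    intro k hk
    have h1 : k+n+2 = (n+k+1) + 1 := by omega
    have hne : ((n+k+1).factorial : ℚ) ≠ 0 := by
      exact_mod_cast (Nat.factorial_ne_zero _)
    have hfac : ((k+n+2).factorial : ℚ) = (((n:ℚ)+2)+k) * ((n+k+1).factorial : ℚ) := by
      rw [h1]
      have h4 := Nat.factorial_succ (n+k+1)
      rw [h4]
      push_cast
      ring
    rw [hfac]
    have hne2 : ((n:ℚ)+2) + k ≠ 0 := by positivity
    field_simp
  rw [Finset.sum_congr rfl key, beta_sum n ((n:ℚ)+2) (by positivity)]
  have h1 : (0:ℚ) < (n.factorial : ℚ) := by exact_mod_cast n.factorial_pos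
  have h2 : (0:ℚ) < ∏ k ∈ Finset.range (n+1), (((n:ℚ)+2) + k) := by
    apply Finset.prod_pos
    intro k _
    positivity
  positivity

end helpers

/-- For `m ≥ 1`, the matrix `A` with `A_{i,j} = 1/(2m-i-j)!` (for `0 ≤ i,j ≤ m-1`)
is invertible and, with `v_k = 1/(m-k)!`, one has `vᵀ A⁻¹ v = 1 - (-1)^m`. -/
theorem hankel_inverse_quadratic_form (m : ℕ) (hm : 1 ≤ m)
    (A : Matrix (Fin m) (Fin m) ℚ)
    (hA : ∀ i j : Fin m, A i j = 1 / ((2 * m - (i : ℕ) - (j : ℕ)).factorial : ℚ))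
    (v : Fin m → ℚ)
    (hv : ∀ k : Fin m, v k = 1 / ((m - (k : ℕ)).factorial : ℚ)) :
    IsUnit A ∧ dotProduct v (A⁻¹.mulVec v) = 1 - (-1 : ℚ) ^ m := by
  -- the triangularizing matrix
  set T : Matrix (Fin m) (Fin m) ℚ := Matrix.of fun i k : Fin m =>
    (-1:ℚ)^(m-1-(k:ℕ)) * ((m-1-(i:ℕ)).choose (m-1-(k:ℕ)) : ℚ)
      * ((2*m-1-(i:ℕ)-(k:ℕ)).factorial : ℚ) with hT
  -- entries of T * A in clean form
  have hTA : ∀ i j : Fin m, (T * A) i j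
      = ∑ k ∈ Finset.range ((m-1-(i:ℕ))+1),
          (-1:ℚ)^k * ((m-1-(i:ℕ)).choose k : ℚ) * (((m-1-(i:ℕ))+k+1).factorial : ℚ)
            / ((k+(m-1-(j:ℕ))+2).factorial : ℚ) := by
    intro i j
    have hi : (i:ℕ) < m := i.isLt
    have hj : (j:ℕ) < m := j.isLt
    set G : ℕ → ℚ := fun k =>
      (-1:ℚ)^k * ((m-1-(i:ℕ)).choose k : ℚ) * (((m-1-(i:ℕ))+k+1).factorial : ℚ)
        / ((k+(m-1-(j:ℕ))+2).factorial : ℚ) with hG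
    have step1 : (T * A) i j = ∑ k ∈ Finset.range m, G (m-1-k) := by
      rw [Matrix.mul_apply]
      rw [← Fin.sum_univ_eq_sum_range (fun k => G (m-1-k)) m]
      apply Finset.sum_congr rfl
      intro k _
      have hk : (k:ℕ) < m := k.isLt
      rw [hA k j, hT]
      simp only [Matrix.of_apply, hG]
      have e1 : (m-1-(i:ℕ))+(m-1-(k:ℕ))+1 = 2*m-1-(i:ℕ)-(k:ℕ) := by omega
      have e2 : (m-1-(k:ℕ))+(m-1-(j:ℕ))+2 = 2*m-(k:ℕ)-(j:ℕ) := by omega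
      rw [e1, e2]
      ring
    rw [step1, Finset.sum_range_reflect G m]
    symm
    apply Finset.sum_subset
    · apply Finset.range_subset_range.2
      omega
    · intro k hk hnk
      have hlt : m-1-(i:ℕ) < k := by
        simp only [Finset.mem_range] at hk hnk
        omega
      simp [Nat.choose_eq_zero_of_lt hlt]
  -- T * A is lower triangular with positive diagonal
  have hBz : ∀ i j : Fin m, i < j → (T * A) i j = 0 := by
    intro i j hij
    rw [hTA i j]
    exact S_zero (m-1-(i:ℕ)) (m-1-(j:ℕ)) (by have := i.isLt; have := j.isLt; omega)
  have hBd : ∀ i : Fin m, 0 < (T * A) i i := by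
    intro i
    rw [hTA i i]
    exact S_diag (m-1-(i:ℕ))
  have htri : (T * A).BlockTriangular OrderDual.toDual := by
    intro i j hlt
    exact hBz i j hlt
  have hdetB : (T * A).det = ∏ i, (T * A) i i :=
    Matrix.det_of_lowerTriangular _ htri
  have hdetBne : (T * A).det ≠ 0 := by
    rw [hdetB]
    exact Finset.prod_ne_zero_iff.2 (fun i _ => ne_of_gt (hBd i))
  have hdetA : A.det ≠ 0 := by
    intro h
    rw [Matrix.det_mul, h, mul_zero] at hdetBne
    exact hdetBne rfl
  have hunit : IsUnit A := (Matrix.isUnit_iff_isUnit_det A).2 (isUnit_iff_ne_zero.2 hdetA)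
  refine ⟨hunit, ?_⟩
  -- explicit solution x of A x = v
  set xv : Fin m → ℚ := fun j =>
    (-1:ℚ)^(m-1-(j:ℕ)) * ((2*m-(j:ℕ)).factorial : ℚ)
      / (((m-(j:ℕ)).factorial : ℚ) * (((j:ℕ)).factorial : ℚ)) with hxv
  have hterm : ∀ (N : ℕ), m ≤ N → ∀ j : ℕ, j < m →
      (1/((N-j).factorial : ℚ)) * ((-1:ℚ)^(m-1-j) * ((2*m-j).factorial : ℚ)
          / (((m-j).factorial : ℚ) * ((j).factorial : ℚ)))
      = (-1:ℚ)^(m-1) / (m.factorial : ℚ)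
          * ((-1:ℚ)^j * (m.choose j : ℚ) * ((2*m-j).factorial : ℚ) / ((N-j).factorial : ℚ)) := by
    intro N hN j hj
    have hsign : (-1:ℚ)^(m-1-j) = (-1:ℚ)^(m-1) * (-1:ℚ)^j := by
      have h1 : (-1:ℚ)^(m-1-j) * (-1:ℚ)^j = (-1:ℚ)^(m-1) := by
        rw [← pow_add]
        congr 1
        omega
      have h2 : (-1:ℚ)^j * (-1:ℚ)^j = 1 := by
        rw [← pow_add, ← two_mul, pow_mul]
        norm_num
      calc (-1:ℚ)^(m-1-j) = (-1:ℚ)^(m-1-j) * ((-1:ℚ)^j * (-1:ℚ)^j) := by rw [h2]; ring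
        _ = ((-1:ℚ)^(m-1-j) * (-1:ℚ)^j) * (-1:ℚ)^j := by ring
        _ = (-1:ℚ)^(m-1) * (-1:ℚ)^j := by rw [h1]
    have hcf : (m.choose j : ℚ) * ((j).factorial : ℚ) * (((m-j)).factorial : ℚ)
        = (m.factorial : ℚ) := by
      exact_mod_cast congrArg (Nat.cast : ℕ → ℚ)
        (Nat.choose_mul_factorial_mul_factorial (le_of_lt hj))
    have hne1 : ((N-j).factorial : ℚ) ≠ 0 := by exact_mod_cast Nat.factorial_ne_zero _
    have hne2 : ((m-j).factorial : ℚ) ≠ 0 := by exact_mod_cast Nat.factorial_ne_zero _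
    have hne3 : ((j).factorial : ℚ) ≠ 0 := by exact_mod_cast Nat.factorial_ne_zero _
    have hne4 : ((m).factorial : ℚ) ≠ 0 := by exact_mod_cast Nat.factorial_ne_zero _
    rw [hsign]
    field_simp
    linear_combination (-1:ℚ) * hcf
  have hsum : ∀ (N : ℕ), m ≤ N → N ≤ 2*m →
      ∑ j ∈ Finset.range m,
          (-1:ℚ)^j * (m.choose j : ℚ) * ((2*m-j).factorial : ℚ) / ((N-j).factorial : ℚ)
      = (if N = m then (m.factorial : ℚ) else 0)
          - (-1:ℚ)^m * ((m.factorial : ℚ) / ((N-m).factorial : ℚ)) := by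
    intro N hN1 hN2
    have := pade m N hm hN1 hN2
    rw [Finset.sum_range_succ] at this
    have hlast : (-1:ℚ)^m * (m.choose m : ℚ) * ((2*m-m).factorial : ℚ) / ((N-m).factorial : ℚ)
        = (-1:ℚ)^m * ((m.factorial : ℚ) / ((N-m).factorial : ℚ)) := by
      rw [Nat.choose_self]
      have : 2*m-m = m := by omega
      rw [this]
      push_cast
      ring
    rw [hlast] at this
    linarith [this]
  -- A.mulVec xv = v
  have hAx : A.mulVec xv = v := by
    funext i
    have hi : (i:ℕ) < m := i.isLt
    have step : A.mulVec xv i = ∑ j ∈ Finset.range m,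
        (1/(((2*m-(i:ℕ))-j).factorial : ℚ)) * ((-1:ℚ)^(m-1-j) * ((2*m-j).factorial : ℚ)
          / (((m-j).factorial : ℚ) * ((j).factorial : ℚ))) := by
      rw [Matrix.mulVec, dotProduct]
      rw [← Fin.sum_univ_eq_sum_range (fun j => (1/(((2*m-(i:ℕ))-j).factorial : ℚ))
        * ((-1:ℚ)^(m-1-j) * ((2*m-j).factorial : ℚ)
          / (((m-j).factorial : ℚ) * ((j).factorial : ℚ)))) m]
      apply Finset.sum_congr rfl
      intro j _
      rw [hA i j, hxv]
    rw [step]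
    have step2 : ∀ j ∈ Finset.range m,
        (1/(((2*m-(i:ℕ))-j).factorial : ℚ)) * ((-1:ℚ)^(m-1-j) * ((2*m-j).factorial : ℚ)
          / (((m-j).factorial : ℚ) * ((j).factorial : ℚ)))
        = (-1:ℚ)^(m-1) / (m.factorial : ℚ)
          * ((-1:ℚ)^j * (m.choose j : ℚ) * ((2*m-j).factorial : ℚ)
            / (((2*m-(i:ℕ))-j).factorial : ℚ)) := by
      intro j hj
      exact hterm (2*m-(i:ℕ)) (by omega) j (Finset.mem_range.mp hj)
    rw [Finset.sum_congr rfl step2, ← Finset.mul_sum,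
      hsum (2*m-(i:ℕ)) (by omega) (by omega), if_neg (by omega : ¬ (2*m-(i:ℕ) = m))]
    have e3 : (2*m-(i:ℕ))-m = m-(i:ℕ) := by omega
    rw [e3, hv i]
    have hsign2 : (-1:ℚ)^(m-1) * (-1:ℚ)^m = -1 := by
      rw [← pow_add]
      have : m-1+m = 2*(m-1)+1 := by omega
      rw [this, pow_succ, pow_mul]
      norm_num
    have hne4 : ((m).factorial : ℚ) ≠ 0 := by exact_mod_cast Nat.factorial_ne_zero _
    have hne5 : ((m-(i:ℕ)).factorial : ℚ) ≠ 0 := by exact_mod_cast Nat.factorial_ne_zero _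
    field_simp
    linear_combination (-(m.factorial : ℚ)) * hsign2
  have hdu : IsUnit A.det := isUnit_iff_ne_zero.2 hdetA
  have hxinv : A⁻¹.mulVec v = xv := by
    rw [← hAx, Matrix.mulVec_mulVec, Matrix.nonsing_inv_mul A hdu, Matrix.one_mulVec]
  rw [hxinv, dotProduct]
  have step : ∑ j : Fin m, v j * xv j = ∑ j ∈ Finset.range m,
      (1/(((m-j).factorial : ℚ))) * ((-1:ℚ)^(m-1-j) * ((2*m-j).factorial : ℚ)
        / (((m-j).factorial : ℚ) * ((j).factorial : ℚ))) := by
    rw [← Fin.sum_univ_eq_sum_range (fun j => (1/(((m-j).factorial : ℚ)))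
      * ((-1:ℚ)^(m-1-j) * ((2*m-j).factorial : ℚ)
        / (((m-j).factorial : ℚ) * ((j).factorial : ℚ)))) m]
    apply Finset.sum_congr rfl
    intro j _
    rw [hv j, hxv]
  rw [step]
  have step2 : ∀ j ∈ Finset.range m,
      (1/(((m-j).factorial : ℚ))) * ((-1:ℚ)^(m-1-j) * ((2*m-j).factorial : ℚ)
        / (((m-j).factorial : ℚ) * ((j).factorial : ℚ)))
      = (-1:ℚ)^(m-1) / (m.factorial : ℚ)
        * ((-1:ℚ)^j * (m.choose j : ℚ) * ((2*m-j).factorial : ℚ) / ((m-j).factorial : ℚ)) := by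
    intro j hj
    exact hterm m le_rfl j (Finset.mem_range.mp hj)
  rw [Finset.sum_congr rfl step2, ← Finset.mul_sum, hsum m le_rfl (by omega), if_pos rfl]
  have e4 : m - m = 0 := by omega
  rw [e4, Nat.factorial_zero]
  have hsign2 : (-1:ℚ)^(m-1) * (-1:ℚ)^m = -1 := by
    rw [← pow_add]
    have : m-1+m = 2*(m-1)+1 := by omega
    rw [this, pow_succ, pow_mul]
    norm_num
  have hne4 : ((m).factorial : ℚ) ≠ 0 := by exact_mod_cast Nat.factorial_ne_zero _
  have hsign3 : (-1:ℚ)^(m-1) = -(-1:ℚ)^m := by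
    have h5 : (-1:ℚ)^m = (-1:ℚ)^(m-1) * (-1:ℚ) := by
      rw [← pow_succ]
      congr 1
      omega
    rw [h5]; ring
  field_simp
  linear_combination (-1:ℚ) * hsign2 + hsign3
end

section
/- For any natural number m ≥ 1 and any i with 1 ≤ i ≤ m, the sum ∑_{j=1}^{m+1} (-1)^{m+j} (2m-j+1)! / ((2m-i-j+2)! (j-1)! (m-j+1)!) equals 0. -/
open Polynomial in
lemma alt_sum_choose_aux (m r : ℕ) (hr : r < m) :
    ∑ k ∈ Finset.range (m + 1),
      (-1 : ℚ) ^ k * (m.choose k : ℚ) * ((2 * m - k).choose r : ℚ) = 0 := by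
  have hX : (X : ℚ[X]) ^ m
      = ∑ k ∈ Finset.range (m + 1), (X + 1) ^ k * (-1) ^ (m - k) * (m.choose k : ℚ[X]) := by
    have h := add_pow (X + 1 : ℚ[X]) (-1) m
    simpa using h
  have key : (((X + 1 : ℚ[X]) ^ m) * X ^ m).coeff r = 0 := by
    rw [Polynomial.coeff_mul_X_pow']
    simp [Nat.not_le.mpr hr]
  rw [hX, Finset.mul_sum] at key
  rw [Polynomial.finset_sum_coeff] at key
  have hterm : ∀ k ∈ Finset.range (m + 1),
      ((X + 1 : ℚ[X]) ^ m * ((X + 1) ^ k * (-1) ^ (m - k) * (m.choose k : ℚ[X]))).coeff r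
        = (-1 : ℚ) ^ (m - k) * (m.choose k : ℚ) * ((m + k).choose r : ℚ) := by
    intro k _
    have heq : (X + 1 : ℚ[X]) ^ m * ((X + 1) ^ k * (-1) ^ (m - k) * (m.choose k : ℚ[X]))
        = (X + 1) ^ (m + k) * Polynomial.C ((-1 : ℚ) ^ (m - k) * (m.choose k : ℚ)) := by
      rw [map_mul, map_pow, map_neg, map_one, map_natCast, pow_add]; ring
    rw [heq, Polynomial.coeff_mul_C, Polynomial.coeff_X_add_one_pow]; ring
  rw [Finset.sum_congr rfl hterm] at key
  rw [← Finset.sum_range_reflect]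
  rw [← key]
  apply Finset.sum_congr rfl
  intro k hk
  simp only [Finset.mem_range] at hk
  have hk' : k ≤ m := by omega
  have e1 : m + 1 - 1 - k = m - k := by omega
  have e3 : 2 * m - (m - k) = m + k := by omega
  rw [e1, e3, Nat.choose_symm hk']

/-- For `m ≥ 1` and `1 ≤ i ≤ m`,
`∑_{j=1}^{m+1} (-1)^{m+j} (2m-j+1)! / ((2m-i-j+2)! (j-1)! (m-j+1)!) = 0`. -/
theorem factorial_alternating_sum_zero (m i : ℕ) (hm : 1 ≤ m) (hi1 : 1 ≤ i) (hi2 : i ≤ m) :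
    ∑ j ∈ Finset.Icc 1 (m + 1),
      ((-1 : ℚ) ^ (m + j) * ((2 * m + 1 - j).factorial : ℚ) /
        (((2 * m + 2 - i - j).factorial : ℚ) * ((j - 1).factorial : ℚ) *
          ((m + 1 - j).factorial : ℚ)))
      = 0 := by
  have key := alt_sum_choose_aux m (i - 1) (by omega)
  have h1 : ∀ j ∈ Finset.Icc 1 (m + 1),
      ((-1 : ℚ) ^ (m + j) * ((2 * m + 1 - j).factorial : ℚ) /
        (((2 * m + 2 - i - j).factorial : ℚ) * ((j - 1).factorial : ℚ) *
          ((m + 1 - j).factorial : ℚ)))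
      = ((-1 : ℚ) ^ m * ((i - 1).factorial : ℚ) / (m.factorial : ℚ)) *
          ((-1 : ℚ) ^ j * (m.choose (j - 1) : ℚ) * ((2 * m + 1 - j).choose (i - 1) : ℚ)) := by
    intro j hj
    simp only [Finset.mem_Icc] at hj
    have hfac1 : ((2 * m + 1 - j).factorial : ℚ)
        = ((2 * m + 1 - j).choose (i - 1) : ℚ) * ((i - 1).factorial : ℚ)
          * ((2 * m + 2 - i - j).factorial : ℚ) := by
      have h := Nat.choose_mul_factorial_mul_factorial (show i - 1 ≤ 2 * m + 1 - j by omega)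
      have h2 : 2 * m + 1 - j - (i - 1) = 2 * m + 2 - i - j := by omega
      rw [h2] at h
      exact_mod_cast h.symm
    have hfac2 : (m.factorial : ℚ)
        = (m.choose (j - 1) : ℚ) * ((j - 1).factorial : ℚ) * ((m + 1 - j).factorial : ℚ) := by
      have h := Nat.choose_mul_factorial_mul_factorial (show j - 1 ≤ m by omega)
      have h2 : m - (j - 1) = m + 1 - j := by omega
      rw [h2] at h
      exact_mod_cast h.symm
    have hne : ∀ n : ℕ, ((n.factorial : ℚ)) ≠ 0 := fun n => by
      exact_mod_cast n.factorial_ne_zero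
    have hc : (m.choose (j - 1) : ℚ) ≠ 0 := by
      exact_mod_cast Nat.choose_pos (show j - 1 ≤ m by omega) |>.ne'
    rw [hfac1, hfac2, pow_add]
    field_simp [hne, hc]
  rw [Finset.sum_congr rfl h1, ← Finset.mul_sum]
  have h2 : ∑ j ∈ Finset.Icc 1 (m + 1),
      ((-1 : ℚ) ^ j * (m.choose (j - 1) : ℚ) * ((2 * m + 1 - j).choose (i - 1) : ℚ)) = 0 := by
    have hIcc : Finset.Icc 1 (m + 1) = Finset.Ico 1 (m + 2) := by
      rw [show m + 2 = m + 1 + 1 from rfl, Finset.Ico_add_one_right_eq_Icc]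
    rw [hIcc, Finset.sum_Ico_eq_sum_range]
    have h3 : ∀ k ∈ Finset.range (m + 2 - 1),
        ((-1 : ℚ) ^ (1 + k) * (m.choose (1 + k - 1) : ℚ)
          * ((2 * m + 1 - (1 + k)).choose (i - 1) : ℚ))
        = -((-1 : ℚ) ^ k * (m.choose k : ℚ) * ((2 * m - k).choose (i - 1) : ℚ)) := by
      intro k _
      have e1 : 1 + k - 1 = k := by omega
      have e2 : 2 * m + 1 - (1 + k) = 2 * m - k := by omega
      rw [e1, e2, pow_add]; ring
    rw [Finset.sum_congr rfl h3, Finset.sum_neg_distrib]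
    have : (m + 2 - 1) = m + 1 := by omega
    rw [this, key, neg_zero]
  rw [h2, mul_zero]
end

section
/- For any natural number m ≥ 1, the vector x ∈ ℚ^m with entries x_j = (-1)^{m+j} (2m-j+1)! / ((j-1)! (m-j+1)!) for j = 1,…,m satisfies A x = v, where A is the m×m matrix with A_{i,j} = 1/(2m-i-j+2)! (indexing i,j from 1 to m) and v_i = 1/(m-i+1)!. -/
open Polynomial Finset

lemma hankel_key (m r : ℕ) (hr : r < m) :
    ∑ j ∈ Finset.range (m+1), (-1:ℚ)^j * m.choose j * ((2*m-j).choose r) = 0 := by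
  have hpoly : ∑ j ∈ Finset.range (m+1),
      Polynomial.C ((-1:ℚ)^j * m.choose j) * (1 + Polynomial.X)^(2*m-j)
      = (1 + Polynomial.X)^m * Polynomial.X^m := by
    have hX : ((-1 : ℚ[X]) + (1 + Polynomial.X))^m
        = ∑ j ∈ Finset.range (m+1),
            (-1:ℚ[X])^j * (1+Polynomial.X)^(m-j) * ((m.choose j : ℕ) : ℚ[X]) :=
      add_pow _ _ _
    have h0 : (1 + Polynomial.X:ℚ[X])^m * Polynomial.X^m
        = (1 + Polynomial.X)^m * ((-1 : ℚ[X]) + (1 + Polynomial.X))^m := by ring_nf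
    rw [h0, hX, Finset.mul_sum]
    apply Finset.sum_congr rfl
    intro j hj
    have hj' : j ≤ m := Nat.lt_succ_iff.mp (Finset.mem_range.mp hj)
    have h2 : (1 + Polynomial.X:ℚ[X])^m * (1+Polynomial.X)^(m-j) = (1+Polynomial.X)^(2*m-j) := by
      rw [← pow_add]; congr 1; omega
    rw [← h2]
    simp only [map_mul, map_pow, map_neg, map_one, Polynomial.C_eq_natCast]
    ring
  have := congrArg (fun p => Polynomial.coeff p r) hpoly
  simp only [Polynomial.finset_sum_coeff, Polynomial.coeff_C_mul,
    Polynomial.coeff_one_add_X_pow, Polynomial.coeff_mul_X_pow', if_neg (by omega : ¬ m ≤ r)]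
    at this
  simpa [mul_assoc] using this

/-- For `m ≥ 1`, the vector `x` with `x_j = (-1)^{m+j} (2m-j+1)!/((j-1)!(m-j+1)!)`
(for `j = 1,…,m`) satisfies `A x = v`, where `A_{i,j} = 1/(2m-i-j+2)!` and
`v_i = 1/(m-i+1)!` (indices `1,…,m`). -/
theorem hankel_system_solution (m : ℕ) (hm : 1 ≤ m)
    (A : Matrix (Fin m) (Fin m) ℚ)
    (hA : ∀ i j : Fin m,
      A i j = 1 / ((2 * m + 2 - ((i : ℕ) + 1) - ((j : ℕ) + 1)).factorial : ℚ))
    (v : Fin m → ℚ)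
    (hv : ∀ i : Fin m, v i = 1 / ((m + 1 - ((i : ℕ) + 1)).factorial : ℚ))
    (x : Fin m → ℚ)
    (hx : ∀ j : Fin m,
      x j = (-1 : ℚ) ^ (m + ((j : ℕ) + 1)) * ((2 * m + 1 - ((j : ℕ) + 1)).factorial : ℚ) /
        (((((j : ℕ) + 1) - 1).factorial : ℚ) * ((m + 1 - ((j : ℕ) + 1)).factorial : ℚ))) :
    A.mulVec x = v := by
  funext i
  set r := (i : ℕ) with hr
  have hrm : r < m := i.isLt
  set C0 : ℚ := (-1:ℚ)^(m+1) * (r.factorial : ℚ) / (m.factorial : ℚ) with hC0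
  set g : ℕ → ℚ := fun j => C0 * ((-1:ℚ)^j * m.choose j * ((2*m-j).choose r)) with hg
  have hterm : ∀ j : Fin m, A i j * x j = g (j : ℕ) := by
    intro j
    have hjm : (j : ℕ) < m := j.isLt
    rw [hA, hx]
    have e1 : 2 * m + 2 - (r + 1) - ((j:ℕ) + 1) = 2*m - r - (j:ℕ) := by omega
    have e2 : 2 * m + 1 - ((j:ℕ) + 1) = 2*m - (j:ℕ) := by omega
    have e3 : m + 1 - ((j:ℕ) + 1) = m - (j:ℕ) := by omega
    have e4 : (j:ℕ) + 1 - 1 = (j:ℕ) := by omega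
    have e5 : m + ((j:ℕ)+1) = (m+1) + (j:ℕ) := by omega
    rw [e1, e2, e3, e4, e5, pow_add]
    have hnat : m.factorial * (2*m-(j:ℕ)).factorial
        = r.factorial * (m.choose (j:ℕ)) * ((2*m-(j:ℕ)).choose r)
          * ((j:ℕ).factorial * (m-(j:ℕ)).factorial * (2*m-r-(j:ℕ)).factorial) := by
      have h1 := Nat.choose_mul_factorial_mul_factorial (le_of_lt hjm)
      have h2 := Nat.choose_mul_factorial_mul_factorial
        (show r ≤ 2*m - (j:ℕ) by omega)
      have h3 : 2*m - (j:ℕ) - r = 2*m - r - (j:ℕ) := by omega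
      rw [h3] at h2
      calc m.factorial * (2*m-(j:ℕ)).factorial
          = (m.choose (j:ℕ) * (j:ℕ).factorial * (m-(j:ℕ)).factorial)
            * ((2*m-(j:ℕ)).choose r * r.factorial * (2*m-r-(j:ℕ)).factorial) := by
            rw [h1, h2]
        _ = _ := by ring
    have hq : (m.factorial : ℚ) * ((2*m-(j:ℕ)).factorial : ℚ)
        = (r.factorial : ℚ) * (m.choose (j:ℕ) : ℚ) * ((2*m-(j:ℕ)).choose r : ℚ)
          * (((j:ℕ).factorial : ℚ) * ((m-(j:ℕ)).factorial : ℚ)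
            * ((2*m-r-(j:ℕ)).factorial : ℚ)) := by exact_mod_cast hnat
    have f1 : ((2*m-r-(j:ℕ)).factorial : ℚ) ≠ 0 := Nat.cast_ne_zero.mpr (Nat.factorial_ne_zero _)
    have f2 : ((j:ℕ).factorial : ℚ) ≠ 0 := Nat.cast_ne_zero.mpr (Nat.factorial_ne_zero _)
    have f3 : ((m-(j:ℕ)).factorial : ℚ) ≠ 0 := Nat.cast_ne_zero.mpr (Nat.factorial_ne_zero _)
    have f4 : ((m).factorial : ℚ) ≠ 0 := Nat.cast_ne_zero.mpr (Nat.factorial_ne_zero _)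
    rw [hg, hC0]
    field_simp
    linear_combination hq
  have hsum : A.mulVec x i = ∑ j ∈ Finset.range m, g j := by
    rw [Matrix.mulVec, dotProduct, ← Fin.sum_univ_eq_sum_range g m]
    exact Finset.sum_congr rfl fun j _ => hterm j
  have hkey := hankel_key m r hrm
  rw [Finset.sum_range_succ] at hkey
  have hlast : ∑ j ∈ Finset.range m, (-1:ℚ)^j * m.choose j * ((2*m-j).choose r)
      = -((-1:ℚ)^m * (m.choose r)) := by
    have h2m : 2*m - m = m := by omega
    rw [h2m] at hkey
    simp only [Nat.choose_self, Nat.cast_one, mul_one] at hkey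
    linarith
  rw [hsum, hg]
  simp only
  rw [← Finset.mul_sum, hlast, hv]
  have e3 : m + 1 - (r + 1) = m - r := by omega
  rw [e3]
  have hcmf := Nat.choose_mul_factorial_mul_factorial (le_of_lt hrm)
  have hq2 : (m.choose r : ℚ) * (r.factorial : ℚ) * ((m-r).factorial : ℚ)
      = (m.factorial : ℚ) := by exact_mod_cast hcmf
  have f4 : ((m).factorial : ℚ) ≠ 0 := Nat.cast_ne_zero.mpr (Nat.factorial_ne_zero _)
  have f5 : ((m-r).factorial : ℚ) ≠ 0 := Nat.cast_ne_zero.mpr (Nat.factorial_ne_zero _)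
  rw [hC0]
  have hs2 : ((-1:ℚ))^(m*2) = 1 := Even.neg_one_pow ⟨m, by ring⟩
  field_simp
  linear_combination ((-1:ℚ)^(m+1) * (-1:ℚ)^m * (-1)) * hq2 + (m.factorial:ℚ) * hs2
end

section
/- For any natural number m ≥ 1, ∑_{j=1}^{m} (-1)^{m+j} (2m-j+1)! / ((j-1)! ((m-j+1)!)^2) = 1 - (-1)^m, as rational numbers. -/
open Polynomial Finset

lemma poly_key (n : ℕ) :
    ∑ k ∈ Finset.range (n+1),
      (-1:ℚ)^k * (n.choose k) * ((2*n-k).choose n) = 1 := by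
  have h0 : ((-1 : ℚ[X]) + (X + 1))^n = X^n := by ring_nf
  have h1 : (X:ℚ[X])^n * (X+1)^n =
      ∑ k ∈ Finset.range (n+1), (-1:ℚ[X])^k * (X+1)^(2*n-k) * (n.choose k : ℚ[X]) := by
    rw [← h0, add_pow, Finset.sum_mul]
    refine Finset.sum_congr rfl fun k hk => ?_
    have hk' : k ≤ n := Nat.lt_succ_iff.mp (Finset.mem_range.mp hk)
    have he : n - k + n = 2*n - k := by omega
    rw [show ((-1:ℚ[X]) ^ k * (X + 1) ^ (n - k) * (n.choose k:ℚ[X])) * (X + 1) ^ n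
        = (-1:ℚ[X]) ^ k * ((X + 1) ^ (n - k) * (X + 1) ^ n) * (n.choose k:ℚ[X]) by ring,
      ← pow_add, he]
  have h2 := congrArg (fun p => Polynomial.coeff p n) h1
  simp only [Polynomial.finset_sum_coeff] at h2
  have hL : ((X:ℚ[X])^n * (X+1)^n).coeff n = 1 := by
    have h := Polynomial.coeff_X_pow_mul (((X:ℚ[X])+1)^n) n 0
    simp only [zero_add] at h
    rw [h, Polynomial.coeff_zero_eq_eval_zero]
    simp
  rw [hL] at h2
  calc ∑ k ∈ Finset.range (n+1), (-1:ℚ)^k * (n.choose k) * ((2*n-k).choose n)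
      = ∑ k ∈ Finset.range (n+1),
        ((-1:ℚ[X])^k * (X+1)^(2*n-k) * (n.choose k : ℚ[X])).coeff n := by
        refine Finset.sum_congr rfl fun k hk => ?_
        have e1 : (-1:ℚ[X])^k = Polynomial.C ((-1:ℚ)^k) := by simp
        have e2 : ((n.choose k : ℕ) : ℚ[X]) = Polynomial.C ((n.choose k : ℕ) : ℚ) := by simp
        rw [e1, e2, Polynomial.coeff_mul_C, Polynomial.coeff_C_mul,
          Polynomial.coeff_X_add_one_pow]
        ring
    _ = 1 := h2.symm

lemma fact_to_choose (n k : ℕ) (hk : k ≤ n) :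
    ((2*n-k).factorial : ℚ) / ((k.factorial:ℚ) * ((n-k).factorial:ℚ)^2)
      = (n.choose k) * ((2*n-k).choose n) := by
  have h1 : n ≤ 2*n - k := by omega
  rw [Nat.cast_choose ℚ hk, Nat.cast_choose ℚ h1, show 2*n-k-n = n-k by omega]
  have f1 : (k.factorial:ℚ) ≠ 0 := Nat.cast_ne_zero.mpr k.factorial_ne_zero
  have f2 : ((n-k).factorial:ℚ) ≠ 0 := Nat.cast_ne_zero.mpr (n-k).factorial_ne_zero
  have f3 : (n.factorial:ℚ) ≠ 0 := Nat.cast_ne_zero.mpr n.factorial_ne_zero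
  field_simp

/-- For `m ≥ 1`, `∑_{j=1}^{m} (-1)^{m+j} (2m-j+1)!/((j-1)!((m-j+1)!)^2) = 1 - (-1)^m`. -/
theorem factorial_alternating_sum_eq (m : ℕ) (hm : 1 ≤ m) :
    ∑ j ∈ Finset.Icc 1 m,
      ((-1 : ℚ) ^ (m + j) * ((2 * m + 1 - j).factorial : ℚ) /
        (((j - 1).factorial : ℚ) * ((m + 1 - j).factorial : ℚ) ^ 2))
      = 1 - (-1 : ℚ) ^ m := by
  have key := poly_key m
  -- rewrite sum over Icc as sum over range m
  have hIcc : Finset.Icc 1 m = Finset.Ico 1 (m+1) := by rw [Finset.Ico_add_one_right_eq_Icc]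
  rw [hIcc, Finset.sum_Ico_eq_sum_range]
  simp only [Nat.add_sub_cancel]
  have hterm : ∀ k, (-1 : ℚ) ^ (m + (1+k)) * ((2 * m + 1 - (1+k)).factorial : ℚ) /
        ((((1+k) - 1).factorial : ℚ) * ((m + 1 - (1+k)).factorial : ℚ) ^ 2)
      = (-1:ℚ)^(m+1+k) * (((2*m-k).factorial : ℚ) /
          ((k.factorial:ℚ) * ((m-k).factorial:ℚ)^2)) := by
    intro k
    rw [show 2*m+1-(1+k) = 2*m-k by omega, show (1+k)-1 = k by omega,
      show m+1-(1+k) = m-k by omega, show m+(1+k) = m+1+k by omega, mul_div_assoc]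
  simp only [hterm]
  -- extend the sum to range (m+1)
  have hsplit := Finset.sum_range_succ
    (fun k => (-1:ℚ)^(m+1+k) * (((2*m-k).factorial : ℚ) /
          ((k.factorial:ℚ) * ((m-k).factorial:ℚ)^2))) m
  have hfull : ∑ k ∈ Finset.range (m+1), (-1:ℚ)^(m+1+k) * (((2*m-k).factorial : ℚ) /
          ((k.factorial:ℚ) * ((m-k).factorial:ℚ)^2)) = (-1:ℚ)^(m+1) := by
    calc ∑ k ∈ Finset.range (m+1), (-1:ℚ)^(m+1+k) * (((2*m-k).factorial : ℚ) /
          ((k.factorial:ℚ) * ((m-k).factorial:ℚ)^2))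
        = (-1:ℚ)^(m+1) * ∑ k ∈ Finset.range (m+1),
            (-1:ℚ)^k * (m.choose k) * ((2*m-k).choose m) := by
          rw [Finset.mul_sum]
          refine Finset.sum_congr rfl fun k hk => ?_
          have hk' : k ≤ m := Nat.lt_succ_iff.mp (Finset.mem_range.mp hk)
          rw [fact_to_choose m k hk', pow_add]
          ring
      _ = (-1:ℚ)^(m+1) := by rw [key, mul_one]
  have hlast : (-1:ℚ)^(m+1+m) * (((2*m-m).factorial : ℚ) /
          ((m.factorial:ℚ) * ((m-m).factorial:ℚ)^2)) = -1 := by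
    have h1 : 2*m-m = m := by omega
    have h2 : m-m = 0 := by omega
    rw [h1, h2]
    have hf : (m.factorial : ℚ) ≠ 0 := Nat.cast_ne_zero.mpr m.factorial_ne_zero
    rw [Nat.factorial_zero]
    rw [show m+1+m = 2*m+1 by omega, pow_succ, pow_mul]
    simp [hf]
  rw [hsplit, hlast] at hfull
  have : ∑ k ∈ Finset.range m, (-1:ℚ)^(m+1+k) * (((2*m-k).factorial : ℚ) /
          ((k.factorial:ℚ) * ((m-k).factorial:ℚ)^2)) = (-1:ℚ)^(m+1) + 1 := by
    linarith [hfull]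
  rw [this, pow_succ]
  ring
end

section
/- Let k = ℂ and n = 2m with the basic G_a-action (t*z)_k = ∑_{i=0}^{k} t^{k-i}/(k-i)! z_i on ℂ^{n+1}. Suppose a = (0,…,0, a_m, a_{m+1},…, a_{2m}) has its first m coordinates zero, and b = (0,…,0, (-1)^m a_m, b_{m+1},…, b_{2m}) has its first m coordinates zero and its m-th coordinate equal to (-1)^m a_m. Then (a,b) lies in the Zariski closure of the graph Γ = {(x, t*x) : x ∈ ℂ^{n+1}, t ∈ ℂ}. -/
open Finset

/-- Finite-difference identity: the `j`-th alternating difference of `C(·,p)`. -/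
lemma idInt (p j : ℕ) : ∀ M : ℕ, j ≤ M →
    ∑ k ∈ Finset.range (j + 1), (-1 : ℤ) ^ k * (j.choose k) * ((M - k).choose p)
      = if j ≤ p then ((M - j).choose (p - j) : ℤ) else 0 := by
  induction j with
  | zero => intro M _; simp
  | succ j ih =>
    intro M hM
    have hsplit : ∀ k : ℕ, (((j+1).choose k : ℤ)) =
        (j.choose k : ℤ) + (if k = 0 then 0 else (j.choose (k-1) : ℤ)) := by
      intro k
      cases k with
      | zero => simp
      | succ k => simp [Nat.choose_succ_succ]; push_cast; ring
    have e1 : ∑ k ∈ Finset.range (j + 2), (-1 : ℤ) ^ k * ((j+1).choose k) * ((M - k).choose p)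
        = (∑ k ∈ Finset.range (j + 2), (-1 : ℤ) ^ k * (j.choose k) * ((M - k).choose p))
          + ∑ k ∈ Finset.range (j + 2), (-1 : ℤ) ^ k *
              (if k = 0 then 0 else (j.choose (k-1) : ℤ)) * ((M - k).choose p) := by
      rw [← Finset.sum_add_distrib]
      refine Finset.sum_congr rfl fun k _ => ?_
      rw [hsplit k]; ring
    have e2 : ∑ k ∈ Finset.range (j + 2), (-1 : ℤ) ^ k * (j.choose k) * ((M - k).choose p)
        = ∑ k ∈ Finset.range (j + 1), (-1 : ℤ) ^ k * (j.choose k) * ((M - k).choose p) := by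
      rw [Finset.sum_range_succ, Nat.choose_succ_self]; simp
    have e3 : ∑ k ∈ Finset.range (j + 2), (-1 : ℤ) ^ k *
          (if k = 0 then 0 else (j.choose (k-1) : ℤ)) * ((M - k).choose p)
        = - ∑ k ∈ Finset.range (j + 1), (-1 : ℤ) ^ k * (j.choose k) * (((M-1) - k).choose p) := by
      rw [Finset.sum_range_succ' (fun k => (-1 : ℤ) ^ k *
          (if k = 0 then 0 else (j.choose (k-1) : ℤ)) * ((M - k).choose p)) (j+1)]
      have h0 : ((-1 : ℤ) ^ 0 * (if (0:ℕ) = 0 then 0 else (j.choose (0-1) : ℤ)) * ((M - 0).choose p)) = 0 := by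
        simp
      rw [h0, add_zero]
      have hcong : ∀ k ∈ Finset.range (j+1), ((-1 : ℤ) ^ (k+1) *
          (if (k+1 : ℕ) = 0 then 0 else (j.choose (k+1-1) : ℤ)) * ((M - (k+1)).choose p))
          = -((-1 : ℤ) ^ k * (j.choose k) * (((M-1) - k).choose p)) := by
        intro k _
        have h : M - (k+1) = (M-1) - k := by omega
        rw [if_neg (Nat.succ_ne_zero k), Nat.succ_sub_one, h, pow_succ]
        ring
      rw [Finset.sum_congr rfl hcong, Finset.sum_neg_distrib]
    rw [e1, e2, e3, ih M (by omega), ih (M-1) (by omega)]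
    by_cases h1 : j + 1 ≤ p
    · rw [if_pos h1, if_pos (by omega), if_pos (by omega)]
      have hM1 : (M-1) - j = M - (j+1) := by omega
      have h2 : M - j = (M - (j+1)) + 1 := by omega
      have h3 : p - j = (p - (j+1)) + 1 := by omega
      rw [hM1, h2, h3, Nat.choose_succ_succ]
      push_cast; ring
    · by_cases h4 : j ≤ p
      · have hp : p = j := by omega
        rw [if_neg h1, if_pos h4, if_pos h4]
        simp [hp]
      · rw [if_neg h1, if_neg h4, if_neg h4]; ring

/-- Scaled Padé coefficients for the exponential. -/
noncomputable def cc (m p k : ℕ) : ℂ :=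
  if k ≤ p then ((p.factorial : ℂ) * ((2*m - k).factorial : ℂ)) /
    ((k.factorial : ℂ) * ((p - k).factorial : ℂ)) else 0

lemma fact_ne (n : ℕ) : ((n.factorial : ℂ)) ≠ 0 :=
  Nat.cast_ne_zero.2 (Nat.factorial_ne_zero n)

/-- The Padé approximation identity for `e^x`, coefficientwise, over `ℂ`. -/
lemma starC (m p q j : ℕ) (hpq : p + q = 2*m) (hj : j ≤ 2*m) :
    ∑ k ∈ Finset.range (j + 1), (-1 : ℂ) ^ k * cc m q k / (((j - k).factorial : ℂ))
      = cc m p j := by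
  have hterm : ∀ k ∈ Finset.range (j+1),
      (-1 : ℂ) ^ k * cc m q k / (((j - k).factorial : ℂ))
        = ((p.factorial : ℂ) * (q.factorial : ℂ) / (j.factorial : ℂ)) *
          ((-1 : ℂ) ^ k * (j.choose k : ℂ) * (((2*m - k).choose p : ℂ))) := by
    intro k hk
    have hkj : k ≤ j := by simpa using Nat.lt_succ_iff.1 (Finset.mem_range.1 hk)
    by_cases hkq : k ≤ q
    · have e1 : (((2*m - k).choose p : ℕ) : ℂ)
          = ((2*m - k).factorial : ℂ) / ((p.factorial : ℂ) * ((q - k).factorial : ℂ)) := by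
        rw [Nat.cast_choose ℂ (show p ≤ 2*m - k by omega), show 2*m - k - p = q - k by omega]
      have e2 : ((j.choose k : ℕ) : ℂ)
          = (j.factorial : ℂ) / ((k.factorial : ℂ) * ((j - k).factorial : ℂ)) :=
        Nat.cast_choose ℂ hkj
      rw [cc, if_pos hkq, e1, e2]
      have h1 := fact_ne p
      have h2 := fact_ne j
      have h3 := fact_ne k
      have h4 := fact_ne (q-k)
      have h5 := fact_ne (j-k)
      have h6 := fact_ne q
      have h7 := fact_ne (2*m-k)
      field_simp
    · rw [cc, if_neg hkq, Nat.choose_eq_zero_of_lt (show 2*m - k < p by omega)]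
      simp
  rw [Finset.sum_congr rfl hterm, ← Finset.mul_sum]
  have hcast : ∑ k ∈ Finset.range (j+1),
      ((-1 : ℂ) ^ k * (j.choose k : ℂ) * (((2*m - k).choose p : ℂ)))
      = ((∑ k ∈ Finset.range (j + 1),
          (-1 : ℤ) ^ k * (j.choose k) * ((2*m - k).choose p) : ℤ) : ℂ) := by
    push_cast; rfl
  rw [hcast, idInt p j (2*m) hj]
  by_cases hjp : j ≤ p
  · rw [if_pos hjp]
    push_cast
    have e3 : (((2*m - j).choose (p - j) : ℕ) : ℂ)
        = ((2*m - j).factorial : ℂ) / (((p-j).factorial : ℂ) * ((q).factorial : ℂ)) := by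
      rw [Nat.cast_choose ℂ (show p - j ≤ 2*m - j by omega), show 2*m - j - (p - j) = q by omega]
    rw [e3, cc, if_pos hjp]
    have h1 := fact_ne p
    have h2 := fact_ne j
    have h3 := fact_ne (p-j)
    have h4 := fact_ne q
    have h5 := fact_ne (2*m-j)
    field_simp
  · rw [if_neg hjp, cc, if_neg hjp]
    simp

noncomputable def alphaC (m : ℕ) (a : ℕ → ℂ) (l : ℕ) : ℂ :=
  (-1) ^ (m + l) * a (m + l) / ((m - l).factorial : ℂ)

noncomputable def betaC (m : ℕ) (b : ℕ → ℂ) (l : ℕ) : ℂ :=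
  if l = 0 then 0 else b (m + l) / ((m - l).factorial : ℂ)

noncomputable def xF (m : ℕ) (a b : ℕ → ℂ) (u : ℂ) (j : ℕ) : ℂ :=
  ∑ l ∈ Finset.range (m + 1),
    (alphaC m a l * ((-1) ^ j * cc m (m + l) j) + betaC m b l * ((-1) ^ j * cc m (m - l) j))
      * u ^ (m + l - j)

noncomputable def yF (m : ℕ) (a b : ℕ → ℂ) (u : ℂ) (j : ℕ) : ℂ :=
  ∑ l ∈ Finset.range (m + 1),
    (alphaC m a l * cc m (m - l) j + betaC m b l * cc m (m + l) j) * u ^ (m + l - j)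

/-- Key summation: action of `t = 1/u` on one Padé block. -/
lemma key_sum (m p q N j : ℕ) (hpq : p + q = 2*m) (hj : j ≤ 2*m) (hqN : q ≤ N)
    (hpN : p ≤ N) (u : ℂ) (hu : u ≠ 0) :
    ∑ k ∈ Finset.range (j + 1),
      (1/u) ^ (j - k) / (((j - k).factorial : ℂ)) * ((-1) ^ k * cc m q k * u ^ (N - k))
      = cc m p j * u ^ (N - j) := by
  have hterm : ∀ k ∈ Finset.range (j+1),
      (1/u) ^ (j - k) / (((j - k).factorial : ℂ)) * ((-1) ^ k * cc m q k * u ^ (N - k))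
        = ((-1 : ℂ) ^ k * cc m q k / (((j - k).factorial : ℂ))) * (u ^ N / u ^ j) := by
    intro k hk
    have hkj : k ≤ j := Nat.lt_succ_iff.1 (Finset.mem_range.1 hk)
    by_cases hkq : k ≤ q
    · have hkN : k ≤ N := le_trans hkq hqN
      have e1 : u ^ (N - k) = u ^ N * (u ^ k)⁻¹ := pow_sub₀ u hu hkN
      have e2 : (1/u) ^ (j - k) = u ^ k * (u ^ j)⁻¹ := by
        rw [one_div, inv_pow, pow_sub₀ u hu hkj]
        simp [mul_comm]
      rw [e1, e2]
      have hcancel : u ^ k * (u⁻¹) ^ k = 1 := by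
        rw [← mul_pow, mul_inv_cancel₀ hu, one_pow]
      field_simp
    · rw [cc, if_neg hkq]
      simp
  rw [Finset.sum_congr rfl hterm, ← Finset.sum_mul, starC m p q j hpq hj]
  by_cases hjN : j ≤ N
  · rw [pow_sub₀ u hu hjN, div_eq_mul_inv]
  · rw [cc, if_neg (show ¬ j ≤ p by omega)]
    simp

lemma graph_id (m : ℕ) (a b : ℕ → ℂ) (u : ℂ) (hu : u ≠ 0) (j : ℕ) (hj : j ≤ 2*m) :
    ∑ k ∈ Finset.range (j + 1), (1/u) ^ (j - k) / (((j - k).factorial : ℂ)) * xF m a b u k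
      = yF m a b u j := by
  have step1 : ∀ k ∈ Finset.range (j+1),
      (1/u) ^ (j - k) / (((j - k).factorial : ℂ)) * xF m a b u k
      = ∑ l ∈ Finset.range (m+1), (1/u) ^ (j - k) / (((j - k).factorial : ℂ)) *
          ((alphaC m a l * ((-1) ^ k * cc m (m + l) k)
            + betaC m b l * ((-1) ^ k * cc m (m - l) k)) * u ^ (m + l - k)) := by
    intro k _
    rw [xF, Finset.mul_sum]
  rw [Finset.sum_congr rfl step1, Finset.sum_comm, yF]
  refine Finset.sum_congr rfl fun l hl => ?_
  have hlm : l ≤ m := Nat.lt_succ_iff.1 (Finset.mem_range.1 hl)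
  have k1 := key_sum m (m - l) (m + l) (m + l) j (by omega) hj le_rfl (by omega) u hu
  have k2 := key_sum m (m + l) (m - l) (m + l) j (by omega) hj (by omega) le_rfl u hu
  calc ∑ k ∈ Finset.range (j+1), (1/u) ^ (j - k) / (((j - k).factorial : ℂ)) *
        ((alphaC m a l * ((-1) ^ k * cc m (m + l) k)
          + betaC m b l * ((-1) ^ k * cc m (m - l) k)) * u ^ (m + l - k))
      = alphaC m a l * ∑ k ∈ Finset.range (j+1), (1/u) ^ (j - k) /
            (((j - k).factorial : ℂ)) * ((-1) ^ k * cc m (m + l) k * u ^ (m + l - k))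
        + betaC m b l * ∑ k ∈ Finset.range (j+1), (1/u) ^ (j - k) /
            (((j - k).factorial : ℂ)) * ((-1) ^ k * cc m (m - l) k * u ^ (m + l - k)) := by
        rw [Finset.mul_sum, Finset.mul_sum, ← Finset.sum_add_distrib]
        exact Finset.sum_congr rfl fun k _ => by ring
    _ = (alphaC m a l * cc m (m - l) j + betaC m b l * cc m (m + l) j) * u ^ (m + l - j) := by
        rw [k1, k2]; ring

lemma cc_self (m p : ℕ) : cc m p p = ((2*m - p).factorial : ℂ) := by
  rw [cc, if_pos le_rfl, Nat.sub_self, Nat.factorial_zero]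
  rw [Nat.cast_one, mul_one, mul_comm, mul_div_assoc, div_self (fact_ne p), mul_one]

lemma neg_one_sq_pow (j : ℕ) : ((-1 : ℂ)) ^ j * ((-1 : ℂ)) ^ j = 1 := by
  rw [← pow_add]
  exact Even.neg_one_pow ⟨j, by ring⟩

lemma xF_zero (m : ℕ) (a b : ℕ → ℂ) (j : ℕ) (hj : j ≤ 2*m) :
    xF m a b 0 j = if m ≤ j then a j else 0 := by
  unfold xF
  by_cases hmj : m ≤ j
  · rw [if_pos hmj, Finset.sum_eq_single (j - m)]
    · have h1 : m + (j - m) = j := by omega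
      have h2 : m - (j - m) = 2*m - j := by omega
      rw [h1, Nat.sub_self, pow_zero, mul_one]
      by_cases hjm : j = m
      · subst hjm
        simp only [Nat.sub_self, alphaC, betaC, if_pos rfl, Nat.add_zero, cc_self,
          Nat.sub_zero, zero_mul, add_zero]
        rw [show 2*j - j = j from by omega]
        have hF := fact_ne j
        have hsq := neg_one_sq_pow j
        field_simp
        simp only [if_true, mul_zero, zero_mul, add_zero]
        linear_combination (a j) * hsq
      · have hcc0 : cc m (m - (j - m)) j = 0 := by rw [cc, if_neg (by omega)]
        rw [hcc0, cc_self, alphaC, h1, h2]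
        have hF := fact_ne (2*m - j)
        have hsq := neg_one_sq_pow j
        field_simp
        linear_combination (a j) * hsq
    · intro l hl hne
      have hlm : l ≤ m := Nat.lt_succ_iff.1 (Finset.mem_range.1 hl)
      by_cases hml : m + l ≤ j
      · have hlt : m + l < j := by omega
        have c1 : cc m (m + l) j = 0 := by rw [cc, if_neg (by omega)]
        have c2 : cc m (m - l) j = 0 := by rw [cc, if_neg (by omega)]
        rw [c1, c2]
        ring
      · rw [zero_pow (show m + l - j ≠ 0 by omega), mul_zero]
    · intro h
      exact absurd (Finset.mem_range.2 (by omega)) h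
  · rw [if_neg hmj]
    refine Finset.sum_eq_zero fun l _ => ?_
    rw [zero_pow (show m + l - j ≠ 0 by omega), mul_zero]

lemma yF_zero (m : ℕ) (a b : ℕ → ℂ) (j : ℕ) (hj : j ≤ 2*m) :
    yF m a b 0 j = if m ≤ j then (if j = m then (-1) ^ m * a m else b j) else 0 := by
  unfold yF
  by_cases hmj : m ≤ j
  · rw [if_pos hmj, Finset.sum_eq_single (j - m)]
    · have h1 : m + (j - m) = j := by omega
      have h2 : m - (j - m) = 2*m - j := by omega
      rw [h1, Nat.sub_self, pow_zero, mul_one]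
      by_cases hjm : j = m
      · subst hjm
        rw [if_pos rfl]
        simp only [Nat.sub_self, alphaC, betaC, if_pos rfl, Nat.add_zero, cc_self,
          Nat.sub_zero, zero_mul, add_zero]
        rw [show 2*j - j = j from by omega]
        have hF := fact_ne j
        field_simp
        simp
      · rw [if_neg hjm]
        have hcc0 : cc m (m - (j - m)) j = 0 := by rw [cc, if_neg (by omega)]
        rw [hcc0, cc_self, mul_zero, zero_add, betaC, if_neg (show ¬ j - m = 0 by omega), h1, h2]
        have hF := fact_ne (2*m - j)
        field_simp
    · intro l hl hne
      have hlm : l ≤ m := Nat.lt_succ_iff.1 (Finset.mem_range.1 hl)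
      by_cases hml : m + l ≤ j
      · have c1 : cc m (m + l) j = 0 := by rw [cc, if_neg (by omega)]
        have c2 : cc m (m - l) j = 0 := by rw [cc, if_neg (by omega)]
        rw [c1, c2]
        ring
      · rw [zero_pow (show m + l - j ≠ 0 by omega), mul_zero]
    · intro h
      exact absurd (Finset.mem_range.2 (by omega)) h
  · rw [if_neg hmj]
    refine Finset.sum_eq_zero fun l _ => ?_
    rw [zero_pow (show m + l - j ≠ 0 by omega), mul_zero]

lemma sum_Iic_val (N : ℕ) (j : Fin (N + 1)) (f : ℕ → ℂ) :
    ∑ i ∈ Finset.Iic j, f (i : ℕ) = ∑ k ∈ Finset.range ((j : ℕ) + 1), f k := by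
  refine Finset.sum_nbij' (fun i : Fin (N+1) => (i : ℕ))
    (fun k => (⟨k % (N+1), Nat.mod_lt _ (Nat.succ_pos N)⟩ : Fin (N+1))) ?_ ?_ ?_ ?_ ?_
  · intro i hi
    have h := Fin.le_def.1 (Finset.mem_Iic.1 hi)
    exact Finset.mem_range.2 (show (i : ℕ) < (j : ℕ) + 1 by omega)
  · intro k hk
    have hk' : k < (j : ℕ) + 1 := Finset.mem_range.1 hk
    refine Finset.mem_Iic.2 (Fin.le_def.2 ?_)
    simp only [Fin.val_mk]
    rw [Nat.mod_eq_of_lt (show k < N + 1 by omega)]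
    omega
  · intro i _
    exact Fin.ext (Nat.mod_eq_of_lt i.isLt)
  · intro k hk
    have hk' : k < (j : ℕ) + 1 := Finset.mem_range.1 hk
    simp only [Fin.val_mk]
    exact Nat.mod_eq_of_lt (by omega)
  · intro i _
    rfl

/-- The basic `G_a`-action on `k^{n+1}`. -/
def gaAct (k : Type*) [Field k] (n : ℕ) (t : k) (z : Fin (n + 1) → k) :
    Fin (n + 1) → k :=
  fun j => ∑ i ∈ Finset.Iic j,
    t ^ ((j : ℕ) - (i : ℕ)) / (((j : ℕ) - (i : ℕ)).factorial : k) * z i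

/-- Let `n = 2m`. If the first `m` coordinates of `a` and `b` vanish and
`b_m = (-1)^m a_m`, then `(a,b)` lies in the Zariski closure of the graph
`Γ = {(x, t*x)}` of the basic `G_a`-action on `ℂ^{n+1}`: every polynomial
vanishing identically on `Γ` vanishes at `(a,b)`. -/
theorem pair_in_graph_closure (m : ℕ) (a b : Fin (2 * m + 1) → ℂ)
    (ha : ∀ i : Fin (2 * m + 1), (i : ℕ) < m → a i = 0)
    (hb : ∀ i : Fin (2 * m + 1), (i : ℕ) < m → b i = 0)
    (hbm : b ⟨m, by omega⟩ = (-1 : ℂ) ^ m * a ⟨m, by omega⟩) :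
    ∀ P : MvPolynomial (Fin (2 * m + 1) ⊕ Fin (2 * m + 1)) ℂ,
      (∀ (x : Fin (2 * m + 1) → ℂ) (t : ℂ),
        MvPolynomial.eval (Sum.elim x (gaAct ℂ (2 * m) t x)) P = 0) →
      MvPolynomial.eval (Sum.elim a b) P = 0 := by
  intro P hP
  set A : ℕ → ℂ := fun i => if h : i < 2*m+1 then a ⟨i, h⟩ else 0 with hA
  set B : ℕ → ℂ := fun i => if h : i < 2*m+1 then b ⟨i, h⟩ else 0 with hB
  set F : ℂ → ((Fin (2*m+1) ⊕ Fin (2*m+1)) → ℂ) := fun u =>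
    Sum.elim (fun j => xF m A B u (j : ℕ)) (fun j => yF m A B u (j : ℕ)) with hF
  have hFc : Continuous F := by
    refine continuous_pi fun s => ?_
    cases s with
    | inl j =>
      simp only [hF, Sum.elim_inl]
      unfold xF
      exact continuous_finset_sum _ fun l _ => by fun_prop
    | inr j =>
      simp only [hF, Sum.elim_inr]
      unfold yF
      exact continuous_finset_sum _ fun l _ => by fun_prop
  have hfc : Continuous fun u => MvPolynomial.eval (F u) P :=
    (MvPolynomial.continuous_eval P).comp hFc
  have hzero : ∀ u : ℂ, u ≠ 0 → MvPolynomial.eval (F u) P = 0 := by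
    intro u hu
    have hx := hP (fun j => xF m A B u (j : ℕ)) (1/u)
    have hgraph : (gaAct ℂ (2*m) (1/u) (fun j => xF m A B u (j : ℕ)))
        = fun j : Fin (2*m+1) => yF m A B u (j : ℕ) := by
      funext j
      show ∑ i ∈ Finset.Iic j, (1/u) ^ ((j:ℕ) - (i:ℕ)) /
          ((((j:ℕ) - (i:ℕ)).factorial : ℂ)) * xF m A B u (i : ℕ) = yF m A B u (j : ℕ)
      rw [sum_Iic_val (2*m) j
        (fun k => (1/u) ^ ((j:ℕ) - k) / ((((j:ℕ) - k).factorial : ℂ)) * xF m A B u k)]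
      exact graph_id m A B u hu (j : ℕ) (by have := j.isLt; omega)
    rw [hgraph] at hx
    exact hx
  have hEq : (fun u => MvPolynomial.eval (F u) P) = fun _ => (0:ℂ) := by
    apply Continuous.ext_on (dense_compl_singleton (0:ℂ)) hfc continuous_const
    intro u hu
    exact hzero u (by simpa using hu)
  have hF0 : F 0 = Sum.elim a b := by
    funext s
    cases s with
    | inl j =>
      simp only [hF, Sum.elim_inl]
      rw [xF_zero m A B (j:ℕ) (by have := j.isLt; omega)]
      by_cases hmj : m ≤ (j:ℕ)
      · rw [if_pos hmj, hA]
        simp only [j.isLt, dif_pos]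
      · rw [if_neg hmj]
        exact (ha j (by omega)).symm
    | inr j =>
      simp only [hF, Sum.elim_inr]
      rw [yF_zero m A B (j:ℕ) (by have := j.isLt; omega)]
      by_cases hmj : m ≤ (j:ℕ)
      · rw [if_pos hmj]
        by_cases hjm : (j:ℕ) = m
        · rw [if_pos hjm, hA]
          simp only [show m < 2*m+1 by omega, dif_pos]
          have hj' : j = (⟨m, by omega⟩ : Fin (2*m+1)) := Fin.ext hjm
          exact ((congrArg b hj').trans hbm).symm
        · rw [if_neg hjm, hB]
          simp only [j.isLt, dif_pos]
      · rw [if_neg hmj]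
        exact (hb j (by omega)).symm
  have h0 : MvPolynomial.eval (F 0) P = 0 := congrFun hEq 0
  rw [hF0] at h0
  exact h0
end

section
/- Let n = 2m+1 be odd and consider the basic G_a-action on k^{n+1} over a field k of characteristic zero, (t*z)_k = ∑_{i=0}^{k} t^{k-i}/(k-i)! z_i. If a and b both have their first m+1 coordinates equal to zero (coordinates 0 through m), then (a,b) lies in the Zariski closure of the graph Γ = {(x, t*x) : x ∈ k^{n+1}, t ∈ k}. -/
open Finset Polynomial

set_option linter.unusedSectionVars false

namespace GaAux


variable {k : Type*} [Field k] [CharZero k]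

lemma fact_ne (n : ℕ) : ((n.factorial : k)) ≠ 0 :=
  Nat.cast_ne_zero.mpr (Nat.factorial_ne_zero n)

/-- Triangular sum swap. -/
lemma sum_swap_tri {M : Type*} [AddCommMonoid M] (L : ℕ) (f : ℕ → ℕ → M) :
    ∑ i ∈ range (L + 1), ∑ r ∈ range (i + 1), f i r
      = ∑ r ∈ range (L + 1), ∑ i ∈ Finset.Icc r L, f i r := by
  rw [Finset.sum_sigma', Finset.sum_sigma']
  refine Finset.sum_nbij' (fun x => ⟨x.2, x.1⟩) (fun x => ⟨x.2, x.1⟩) ?_ ?_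
      (fun _ _ => rfl) (fun _ _ => rfl) (fun _ _ => rfl) <;>
    simp only [Finset.mem_sigma, Finset.mem_range, Finset.mem_Icc, Sigma.forall] <;>
    omega

lemma conv_delta (r l : ℕ) (h : r ≤ l) :
    ∑ i ∈ Finset.Icc r l, (-1 : k) ^ (i - r) / (((l - i).factorial : k) * ((i - r).factorial : k))
      = if l = r then 1 else 0 := by
  have hICC : Finset.Icc r l = Finset.Ico r (l + 1) := by rw [Finset.Ico_add_one_right_eq_Icc]
  rw [hICC, Finset.sum_Ico_eq_sum_range]
  have hu : l + 1 - r = (l - r) + 1 := by omega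
  rw [hu]
  have step : ∀ v ∈ range ((l - r) + 1),
      (-1 : k) ^ (r + v - r) / (((l - (r + v)).factorial : k) * ((r + v - r).factorial : k))
        = ((-1 : k) ^ v * ((l - r).choose v : k)) / ((l - r).factorial : k) := by
    intro v hv
    simp only [mem_range] at hv
    have hvu : v ≤ l - r := by omega
    have h1 : r + v - r = v := by omega
    have h2 : l - (r + v) = l - r - v := by omega
    rw [h1, h2]
    have hch : (((l - r).choose v : k)) * ((v.factorial : k) * ((l - r - v).factorial : k))
        = ((l - r).factorial : k) := by
      have := Nat.choose_mul_factorial_mul_factorial hvu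
      push_cast [← this]
      ring
    have hne1 : ((l - r - v).factorial : k) * ((v.factorial : k)) ≠ 0 :=
      mul_ne_zero (fact_ne _) (fact_ne _)
    rw [div_eq_div_iff hne1 (fact_ne _)]
    calc (-1 : k) ^ v * (l - r).factorial
        = (-1 : k) ^ v * (((l - r).choose v : k)
            * ((v.factorial : k) * ((l - r - v).factorial : k))) := by rw [hch]
      _ = (-1:k) ^ v * ((l - r).choose v :k)
            * (((l - r - v).factorial : k) * (v.factorial : k)) := by ring
  rw [Finset.sum_congr rfl step, ← Finset.sum_div]
  have hcast : (∑ v ∈ range ((l - r) + 1), (-1 : k) ^ v * ((l - r).choose v : k))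
      = if l - r = 0 then 1 else 0 := by
    have := congrArg (Int.cast : ℤ → k) (Int.alternating_sum_range_choose (n := l - r))
    push_cast at this
    exact_mod_cast this
  rw [hcast]
  by_cases hlr : l = r
  · have h0 : l - r = 0 := by omega
    simp [hlr, h0]
  · have h0 : ¬ (l - r = 0) := by omega
    simp [hlr, h0]

lemma L1 (d : ℕ → k) (l : ℕ) :
    ∑ i ∈ range (l + 1),
        (∑ r ∈ range (i + 1), (-1 : k) ^ (i - r) * d r / ((i - r).factorial : k))
          / ((l - i).factorial : k)
      = d l := by
  have step : ∀ i ∈ range (l + 1),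
      (∑ r ∈ range (i + 1), (-1 : k) ^ (i - r) * d r / ((i - r).factorial : k))
          / ((l - i).factorial : k)
        = ∑ r ∈ range (i + 1),
            d r * ((-1 : k) ^ (i - r) / (((l - i).factorial : k) * ((i - r).factorial : k))) := by
    intro i _
    rw [Finset.sum_div]
    refine Finset.sum_congr rfl fun r _ => ?_
    rw [div_div]
    ring
  rw [Finset.sum_congr rfl step, sum_swap_tri]
  have step2 : ∀ r ∈ range (l + 1),
      ∑ i ∈ Finset.Icc r l,
          d r * ((-1 : k) ^ (i - r) / (((l - i).factorial : k) * ((i - r).factorial : k)))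
        = if r = l then d r else 0 := by
    intro r hr
    simp only [mem_range] at hr
    rw [← Finset.mul_sum, conv_delta r l (by omega)]
    by_cases hrl : r = l
    · simp [hrl]
    · rw [if_neg (fun h : l = r => hrl h.symm), if_neg hrl, mul_zero]
  rw [Finset.sum_congr rfl step2, Finset.sum_ite_eq' (range (l + 1)) l (fun r => d r),
    if_pos (by simp)]

lemma L2 (m j : ℕ) (c : ℕ → k)
    (hc : ∀ l, m + 1 ≤ l → l ≤ 2 * m + 1 →
      ∑ i ∈ range (m + 1), c i / ((l - i).factorial : k) = if l = j then 1 else 0)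
    (l : ℕ) (hl1 : m + 1 ≤ l) (hl2 : l ≤ 2 * m + 1) (hj1 : m + 1 ≤ j) :
    ∑ i ∈ range (m + 1),
        (∑ r ∈ range (i + 1), (-1 : k) ^ (i - r) * ((-1 : k) ^ (j - r) * c r)
            / ((i - r).factorial : k))
          / ((l - i).factorial : k)
      = if j ≤ l then -(1 / ((l - j).factorial : k)) else 0 := by
  set d : ℕ → k := fun r => (-1 : k) ^ (j - r) * c r with hd
  -- Step 1 : change each term into a double sum
  have step : ∀ i ∈ range (m + 1),
      (∑ r ∈ range (i + 1), (-1 : k) ^ (i - r) * d r / ((i - r).factorial : k))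
          / ((l - i).factorial : k)
        = ∑ r ∈ range (i + 1),
            d r * ((-1 : k) ^ (i - r) / (((l - i).factorial : k) * ((i - r).factorial : k))) := by
    intro i _
    rw [Finset.sum_div]
    refine Finset.sum_congr rfl fun r _ => ?_
    rw [div_div]; ring
  rw [Finset.sum_congr rfl step, sum_swap_tri]
  -- Step 2 : for r ≤ m, the inner sum over Icc r m equals minus the sum over Icc (m+1) l
  have step2 : ∀ r ∈ range (m + 1),
      ∑ i ∈ Finset.Icc r m,
          d r * ((-1 : k) ^ (i - r) / (((l - i).factorial : k) * ((i - r).factorial : k)))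
        = -∑ i ∈ Finset.Icc (m + 1) l,
            d r * ((-1 : k) ^ (i - r) / (((l - i).factorial : k) * ((i - r).factorial : k))) := by
    intro r hr
    simp only [mem_range] at hr
    have hsplit : ∑ i ∈ Finset.Icc r l,
        d r * ((-1 : k) ^ (i - r) / (((l - i).factorial : k) * ((i - r).factorial : k)))
        = (∑ i ∈ Finset.Icc r m, d r * ((-1:k) ^ (i - r)
            / (((l - i).factorial : k) * ((i - r).factorial : k))))
          + ∑ i ∈ Finset.Icc (m + 1) l, d r * ((-1:k) ^ (i - r)
            / (((l - i).factorial : k) * ((i - r).factorial : k))) := by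
      rw [← Finset.sum_union]
      · congr 1
        ext x
        simp only [Finset.mem_union, Finset.mem_Icc]
        omega
      · rw [Finset.disjoint_left]
        intro x hx hx'
        simp only [Finset.mem_Icc] at hx hx'
        omega
    have hzero : ∑ i ∈ Finset.Icc r l,
        d r * ((-1 : k) ^ (i - r) / (((l - i).factorial : k) * ((i - r).factorial : k))) = 0 := by
      rw [← Finset.mul_sum, conv_delta r l (by omega), if_neg (by omega), mul_zero]
    linear_combination hzero - hsplit
  rw [Finset.sum_congr rfl step2]
  -- Step 3 : swap the (now rectangular) double sum
  rw [Finset.sum_neg_distrib, Finset.sum_comm]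
  have step3 : ∀ i ∈ Finset.Icc (m + 1) l,
      ∑ r ∈ range (m + 1),
          d r * ((-1 : k) ^ (i - r) / (((l - i).factorial : k) * ((i - r).factorial : k)))
        = if i = j then 1 / ((l - i).factorial : k) else 0 := by
    intro i hi
    simp only [Finset.mem_Icc] at hi
    have hterm : ∀ r ∈ range (m + 1),
        d r * ((-1 : k) ^ (i - r) / (((l - i).factorial : k) * ((i - r).factorial : k)))
          = ((-1 : k) ^ (i + j) / ((l - i).factorial : k)) * (c r / ((i - r).factorial : k)) := by
      intro r hr
      simp only [mem_range] at hr
      have hsign : (-1 : k) ^ (i - r) * (-1 : k) ^ (j - r) = (-1 : k) ^ (i + j) := by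
        have h2 : (i - r) + (j - r) + 2 * r = i + j := by omega
        calc (-1 : k) ^ (i - r) * (-1 : k) ^ (j - r)
            = (-1 : k) ^ ((i - r) + (j - r)) * ((-1 : k) ^ (2 * r)) := by
              rw [pow_mul, neg_one_sq, one_pow, mul_one, pow_add]
          _ = (-1 : k) ^ (i + j) := by rw [← pow_add, h2]
      simp only [hd]
      rw [← hsign]
      ring
    rw [Finset.sum_congr rfl hterm, ← Finset.mul_sum,
      hc i (by omega) (by omega)]
    by_cases hij : i = j
    · rw [if_pos hij, if_pos hij, mul_one, hij]
      have : (-1 : k) ^ (j + j) = 1 := by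
        rw [← two_mul, pow_mul, neg_one_sq, one_pow]
      rw [this]
    · rw [if_neg hij, if_neg hij, mul_zero]
  rw [Finset.sum_congr rfl step3]
  have step4 : ∀ i ∈ Finset.Icc (m + 1) l,
      (if i = j then 1 / ((l - i).factorial : k) else 0)
        = if i = j then 1 / ((l - j).factorial : k) else 0 := by
    intro i _
    by_cases hij : i = j
    · rw [if_pos hij, if_pos hij, hij]
    · rw [if_neg hij, if_neg hij]
  rw [Finset.sum_congr rfl step4,
    Finset.sum_ite_eq' (Finset.Icc (m + 1) l) j (fun _ => 1 / ((l - j).factorial : k))]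
  by_cases hjl : j ≤ l
  · rw [if_pos (by simp [Finset.mem_Icc]; omega), if_pos hjl]
  · rw [if_neg (by simp [Finset.mem_Icc]; omega), if_neg hjl, neg_zero]




lemma fact_ne0 (n : ℕ) : ((n.factorial : k)) ≠ 0 :=
  Nat.cast_ne_zero.mpr (Nat.factorial_ne_zero n)

/-- Every polynomial of degree at most `M` is a combination of the `descPochhammer` basis. -/
lemma exists_repr : ∀ (M : ℕ) (p : Polynomial k), p.natDegree ≤ M →
    ∃ c : ℕ → k, p = ∑ i ∈ range (M + 1), Polynomial.C (c i) * descPochhammer k i := by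
  intro M
  induction M with
  | zero =>
    intro p hp
    refine ⟨fun _ => p.coeff 0, ?_⟩
    rw [Finset.sum_range_one, descPochhammer_zero, mul_one]
    exact Polynomial.eq_C_of_natDegree_le_zero hp
  | succ M ih =>
    intro p hp
    set q := p - Polynomial.C (p.coeff (M + 1)) * descPochhammer k (M + 1) with hqdef
    have hmonic : (descPochhammer k (M + 1)).Monic := monic_descPochhammer k (M + 1)
    have hdeg : (descPochhammer k (M + 1)).natDegree = M + 1 := descPochhammer_natDegree k (M + 1)
    have hq : q.natDegree ≤ M := by
      refine Polynomial.natDegree_le_iff_coeff_eq_zero.mpr fun N hN => ?_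
      rw [hqdef, Polynomial.coeff_sub, Polynomial.coeff_C_mul]
      rcases eq_or_lt_of_le (Nat.succ_le_of_lt hN) with hNe | hNl
    -- N = M+1 or N > M+1
      · rw [← hNe]
        have : (descPochhammer k (M + 1)).coeff (M + 1) = 1 := by
          have := hmonic.coeff_natDegree
          rwa [hdeg] at this
        rw [this, mul_one, sub_self]
      · have h1 : p.coeff N = 0 := Polynomial.coeff_eq_zero_of_natDegree_lt (lt_of_le_of_lt hp hNl)
        have h2 : (descPochhammer k (M + 1)).coeff N = 0 :=
          Polynomial.coeff_eq_zero_of_natDegree_lt (by rw [hdeg]; exact hNl)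
        rw [h1, h2, mul_zero, sub_zero]
    obtain ⟨c, hc⟩ := ih q hq
    refine ⟨Function.update c (M + 1) (p.coeff (M + 1)), ?_⟩
    rw [Finset.sum_range_succ]
    have hsame : ∀ i ∈ range (M + 1),
        Polynomial.C (Function.update c (M + 1) (p.coeff (M + 1)) i) * descPochhammer k i
          = Polynomial.C (c i) * descPochhammer k i := by
      intro i hi
      simp only [mem_range] at hi
      rw [Function.update_of_ne (by omega)]
    rw [Finset.sum_congr rfl hsame, ← hc, Function.update_self, hqdef]
    ring

/-- Existence of the interpolation coefficients. -/
lemma exists_c (m j : ℕ) :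
    ∃ c : ℕ → k, ∀ l, m + 1 ≤ l → l ≤ 2 * m + 1 →
      ∑ i ∈ range (m + 1), c i / ((l - i).factorial : k) = if l = j then 1 else 0 := by
  classical
  set s : Finset ℕ := Finset.Icc (m + 1) (2 * m + 1) with hs
  have hvs : Set.InjOn (Nat.cast : ℕ → k) s := fun x _ y _ h => Nat.cast_injective h
  set r : ℕ → k := fun l => if l = j then (l.factorial : k) else 0 with hr
  set p := Lagrange.interpolate s (Nat.cast : ℕ → k) r with hp
  have hcard : s.card = m + 1 := by rw [hs, Nat.card_Icc]; omega
  have hdeg : p.natDegree ≤ m := by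
    by_cases h0 : p = 0
    · rw [h0, Polynomial.natDegree_zero]; omega
    · have := Lagrange.degree_interpolate_lt (v := (Nat.cast : ℕ → k)) r hvs
      rw [← hp, hcard] at this
      have := (Polynomial.natDegree_lt_iff_degree_lt h0).mpr this
      omega
  obtain ⟨c, hrep⟩ := exists_repr m p hdeg
  refine ⟨c, fun l hl1 hl2 => ?_⟩
  have hls : l ∈ s := by rw [hs, Finset.mem_Icc]; omega
  have heval : p.eval (l : k) = r l := Lagrange.eval_interpolate_at_node r hvs hls
  rw [hrep] at heval
  rw [Polynomial.eval_finset_sum] at heval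
  simp only [Polynomial.eval_mul, Polynomial.eval_C,
    descPochhammer_eval_eq_descFactorial] at heval
  have hstep : ∀ i ∈ range (m + 1),
      c i / ((l - i).factorial : k) = c i * (l.descFactorial i : k) / (l.factorial : k) := by
    intro i hi
    simp only [mem_range] at hi
    have hil : i ≤ l := by omega
    have hfac : ((l - i).factorial : k) * (l.descFactorial i : k) = (l.factorial : k) := by
      exact_mod_cast congrArg (Nat.cast : ℕ → k) (Nat.factorial_mul_descFactorial hil)
    rw [div_eq_div_iff (fact_ne0 _) (fact_ne0 _)]
    calc c i * (l.factorial : k)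
        = c i * (((l - i).factorial : k) * (l.descFactorial i : k)) := by rw [hfac]
      _ = c i * (l.descFactorial i : k) * ((l - i).factorial : k) := by ring
  rw [Finset.sum_congr rfl hstep, ← Finset.sum_div, heval]
  simp only [hr]
  by_cases hlj : l = j
  · rw [if_pos hlj, if_pos hlj, div_self (fact_ne0 _)]
  · rw [if_neg hlj, if_neg hlj, zero_div]

/-- `gaAct` as a sum over a range of naturals. -/
lemma gaAct_apply (k : Type*) [Field k] (n : ℕ) (t : k) (z : Fin (n + 1) → k)
    (l : Fin (n + 1)) :
    gaAct k n t z l = ∑ i ∈ range ((l : ℕ) + 1),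
      t ^ ((l : ℕ) - i) / (((l : ℕ) - i).factorial : k)
        * (if h : i < n + 1 then z ⟨i, h⟩ else 0) := by
  unfold gaAct
  refine Finset.sum_bij' (fun (i : Fin (n + 1)) (_ : i ∈ Finset.Iic l) => (i : ℕ))
    (fun i (hi : i ∈ range ((l : ℕ) + 1)) =>
      (⟨i, by simp only [mem_range] at hi; omega⟩ : Fin (n + 1)))
    ?_ ?_ ?_ ?_ ?_
  · intro a ha
    simp only [Finset.mem_Iic] at ha
    simp only [mem_range]
    exact Nat.lt_succ_of_le ha
  · intro b hb
    simp only [mem_range] at hb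
    simp only [Finset.mem_Iic, Fin.le_def]
    omega
  · intro a _
    simp
  · intro b _
    simp
  · intro a _
    rw [dif_pos a.isLt]

end GaAux

/-- Let `n = 2m+1` be odd. If the coordinates `0,…,m` of `a` and of `b` vanish, then
`(a,b)` lies in the Zariski closure of the graph `Γ = {(x, t*x)}` of the basic
`G_a`-action on `k^{n+1}`: every polynomial vanishing on `Γ` vanishes at `(a,b)`. -/

theorem pair_in_graph_closure_odd (k : Type*) [Field k] [CharZero k] (m : ℕ)
    (a b : Fin (2 * m + 1 + 1) → k)
    (ha : ∀ i : Fin (2 * m + 1 + 1), (i : ℕ) ≤ m → a i = 0)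
    (hb : ∀ i : Fin (2 * m + 1 + 1), (i : ℕ) ≤ m → b i = 0) :
    ∀ P : MvPolynomial (Fin (2 * m + 1 + 1) ⊕ Fin (2 * m + 1 + 1)) k,
      (∀ (x : Fin (2 * m + 1 + 1) → k) (t : k),
        MvPolynomial.eval (Sum.elim x (gaAct k (2 * m + 1) t x)) P = 0) →
      MvPolynomial.eval (Sum.elim a b) P = 0 := by
  classical
  intro P hP
  obtain ⟨c, hc⟩ : ∃ c : ℕ → ℕ → k, ∀ j l, m + 1 ≤ l → l ≤ 2 * m + 1 →
      ∑ i ∈ range (m + 1), c j i / ((l - i).factorial : k) = if l = j then 1 else 0 := by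
    choose c hc using fun j => GaAux.exists_c (k := k) m j
    exact ⟨c, hc⟩
  set d : ℕ → ℕ → k := fun j r => (-1 : k) ^ (j - r) * c j r with hd
  set g : ℕ → ℕ → k := fun j i =>
    ∑ r ∈ range (i + 1), (-1 : k) ^ (i - r) * d j r / ((i - r).factorial : k) with hg
  set a' : ℕ → k := fun i => if h : i < 2 * m + 1 + 1 then a ⟨i, h⟩ else 0 with ha'
  set b' : ℕ → k := fun i => if h : i < 2 * m + 1 + 1 then b ⟨i, h⟩ else 0 with hb'
  set Bc : ℕ → ℕ → k := fun j i => b' j * c j i + a' j * g j i with hBc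
  set Dc : ℕ → ℕ → k := fun j i =>
    b' j * (∑ r ∈ range (i + 1), c j r / ((i - r).factorial : k)) + a' j * d j i with hDc
  set xF : ℕ → Polynomial k := fun i => if i ≤ m then
      ∑ j ∈ Finset.Icc (m + 1) (2 * m + 1), Polynomial.C (Bc j i) * Polynomial.X ^ (j - i)
    else Polynomial.C (a' i) with hxF
  set wF : ℕ → Polynomial k := fun i => if i ≤ m then
      ∑ j ∈ Finset.Icc (m + 1) (2 * m + 1), Polynomial.C (Dc j i) * Polynomial.X ^ (j - i)
    else Polynomial.C (b' i) with hwF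
  have haa : ∀ l : Fin (2 * m + 1 + 1), a' (l : ℕ) = a l := by
    intro l; rw [ha']; simp only []; rw [dif_pos l.isLt]
  have hbb : ∀ l : Fin (2 * m + 1 + 1), b' (l : ℕ) = b l := by
    intro l; rw [hb']; simp only []; rw [dif_pos l.isLt]
  -- evaluations of the curve coordinates
  have hxev : ∀ (s : k) (i : ℕ), i ≤ m → (xF i).eval s
      = ∑ j ∈ Finset.Icc (m + 1) (2 * m + 1), Bc j i * s ^ (j - i) := by
    intro s i hi
    rw [hxF]; simp only []; rw [if_pos hi, Polynomial.eval_finset_sum]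
    exact Finset.sum_congr rfl fun j _ => by
      rw [Polynomial.eval_mul, Polynomial.eval_C, Polynomial.eval_pow, Polynomial.eval_X]
  have hxev' : ∀ (s : k) (i : ℕ), ¬ i ≤ m → (xF i).eval s = a' i := by
    intro s i hi
    rw [hxF]; simp only []; rw [if_neg hi, Polynomial.eval_C]
  have hwev : ∀ (s : k) (i : ℕ), i ≤ m → (wF i).eval s
      = ∑ j ∈ Finset.Icc (m + 1) (2 * m + 1), Dc j i * s ^ (j - i) := by
    intro s i hi
    rw [hwF]; simp only []; rw [if_pos hi, Polynomial.eval_finset_sum]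
    exact Finset.sum_congr rfl fun j _ => by
      rw [Polynomial.eval_mul, Polynomial.eval_C, Polynomial.eval_pow, Polynomial.eval_X]
  have hwev' : ∀ (s : k) (i : ℕ), ¬ i ≤ m → (wF i).eval s = b' i := by
    intro s i hi
    rw [hwF]; simp only []; rw [if_neg hi, Polynomial.eval_C]
  -- value of the curve at 0
  have hx0 : ∀ l : Fin (2 * m + 1 + 1), (xF (l : ℕ)).eval 0 = a l := by
    intro l
    by_cases hl : (l : ℕ) ≤ m
    · rw [hxev 0 _ hl, ha l hl]
      apply Finset.sum_eq_zero
      intro j hj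
      simp only [Finset.mem_Icc] at hj
      rw [zero_pow (by omega), mul_zero]
    · rw [hxev' 0 _ hl, haa]
  have hw0 : ∀ l : Fin (2 * m + 1 + 1), (wF (l : ℕ)).eval 0 = b l := by
    intro l
    by_cases hl : (l : ℕ) ≤ m
    · rw [hwev 0 _ hl, hb l hl]
      apply Finset.sum_eq_zero
      intro j hj
      simp only [Finset.mem_Icc] at hj
      rw [zero_pow (by omega), mul_zero]
    · rw [hwev' 0 _ hl, hbb]
  -- THE KEY COMPUTATION
  have key : ∀ s : k, s ≠ 0 →
      gaAct k (2 * m + 1) s⁻¹ (fun l : Fin (2 * m + 1 + 1) => (xF (l : ℕ)).eval s)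
        = fun l : Fin (2 * m + 1 + 1) => (wF (l : ℕ)).eval s := by
    intro s hs
    funext l
    rw [GaAux.gaAct_apply]
    have hz : ∀ i ∈ range ((l : ℕ) + 1),
        (s⁻¹) ^ ((l : ℕ) - i) / (((l : ℕ) - i).factorial : k)
            * (if h : i < 2 * m + 1 + 1 then
                (fun l : Fin (2 * m + 1 + 1) => (xF (l : ℕ)).eval s) ⟨i, h⟩ else 0)
          = (s⁻¹) ^ ((l : ℕ) - i) / (((l : ℕ) - i).factorial : k) * (xF i).eval s := by
      intro i hi
      simp only [mem_range] at hi
      have hi2 : i < 2 * m + 1 + 1 := by have := l.isLt; omega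
      rw [dif_pos hi2]
    rw [Finset.sum_congr rfl hz]
    have hlt : (l : ℕ) < 2 * m + 1 + 1 := l.isLt
    by_cases hl : (l : ℕ) ≤ m
    · -- lower coordinates
      rw [hwev s _ hl]
      have step1 : ∀ i ∈ range ((l : ℕ) + 1),
          (s⁻¹) ^ ((l : ℕ) - i) / (((l : ℕ) - i).factorial : k) * (xF i).eval s
            = ∑ j ∈ Finset.Icc (m + 1) (2 * m + 1),
                s ^ (j - (l : ℕ)) * (Bc j i / (((l : ℕ) - i).factorial : k)) := by
        intro i hi
        simp only [mem_range] at hi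
        rw [hxev s i (by omega), Finset.mul_sum]
        refine Finset.sum_congr rfl fun j hj => ?_
        simp only [Finset.mem_Icc] at hj
        have hsplit : j - i = (j - (l : ℕ)) + ((l : ℕ) - i) := by omega
        rw [hsplit, pow_add]
        have hcan : (s⁻¹) ^ ((l : ℕ) - i) * s ^ ((l : ℕ) - i) = 1 := by
          rw [← mul_pow, inv_mul_cancel₀ hs, one_pow]
        calc (s⁻¹) ^ ((l:ℕ) - i) / (((l:ℕ) - i).factorial : k)
              * (Bc j i * (s ^ (j - (l:ℕ)) * s ^ ((l:ℕ) - i)))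
            = s ^ (j - (l:ℕ)) * (Bc j i / (((l:ℕ) - i).factorial : k))
                * ((s⁻¹) ^ ((l:ℕ) - i) * s ^ ((l:ℕ) - i)) := by ring
          _ = s ^ (j - (l:ℕ)) * (Bc j i / (((l:ℕ) - i).factorial : k)) := by
              rw [hcan, mul_one]
      rw [Finset.sum_congr rfl step1, Finset.sum_comm]
      refine Finset.sum_congr rfl fun j hj => ?_
      rw [← Finset.mul_sum]
      have hBsum : ∑ i ∈ range ((l : ℕ) + 1), Bc j i / (((l : ℕ) - i).factorial : k)
          = Dc j (l : ℕ) := by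
        have hterm : ∀ i ∈ range ((l : ℕ) + 1),
            Bc j i / (((l : ℕ) - i).factorial : k)
              = b' j * (c j i / (((l : ℕ) - i).factorial : k))
                + a' j * (g j i / (((l : ℕ) - i).factorial : k)) := by
          intro i _
          rw [hBc]; simp only []; ring
        rw [Finset.sum_congr rfl hterm, Finset.sum_add_distrib, ← Finset.mul_sum,
          ← Finset.mul_sum]
        have hL1 : ∑ i ∈ range ((l : ℕ) + 1), g j i / (((l : ℕ) - i).factorial : k)
            = d j (l : ℕ) := by
          simp only [hg]
          exact GaAux.L1 (d j) (l : ℕ)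
        rw [hL1, hDc]
      rw [hBsum, mul_comm]
    · -- upper coordinates
      push_neg at hl
      rw [hwev' s _ (by omega), hbb]
      -- split the sum
      rw [range_eq_Ico, ← Finset.sum_Ico_consecutive _ (by omega : 0 ≤ m + 1)
        (by omega : m + 1 ≤ (l : ℕ) + 1), ← range_eq_Ico]
      have hpart2 : ∑ i ∈ Finset.Ico (m + 1) ((l : ℕ) + 1),
          (s⁻¹) ^ ((l : ℕ) - i) / (((l : ℕ) - i).factorial : k) * (xF i).eval s
            = ∑ i ∈ Finset.Icc (m + 1) (l : ℕ),
                a' i * ((s⁻¹) ^ ((l : ℕ) - i) / (((l : ℕ) - i).factorial : k)) := by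
        rw [Finset.Ico_add_one_right_eq_Icc]
        refine Finset.sum_congr rfl fun i hi => ?_
        simp only [Finset.mem_Icc] at hi
        rw [hxev' s i (by omega)]
        ring
      rw [hpart2]
      have hpart1 : ∑ i ∈ range (m + 1),
          (s⁻¹) ^ ((l : ℕ) - i) / (((l : ℕ) - i).factorial : k) * (xF i).eval s
            = b l - ∑ i ∈ Finset.Icc (m + 1) (l : ℕ),
                a' i * ((s⁻¹) ^ ((l : ℕ) - i) / (((l : ℕ) - i).factorial : k)) := by
        have step1 : ∀ i ∈ range (m + 1),
            (s⁻¹) ^ ((l : ℕ) - i) / (((l : ℕ) - i).factorial : k) * (xF i).eval s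
              = ∑ j ∈ Finset.Icc (m + 1) (2 * m + 1),
                  (if j ≤ (l : ℕ) then (s⁻¹) ^ ((l : ℕ) - j) else s ^ (j - (l : ℕ)))
                    * (Bc j i / (((l : ℕ) - i).factorial : k)) := by
          intro i hi
          simp only [mem_range] at hi
          rw [hxev s i (by omega), Finset.mul_sum]
          refine Finset.sum_congr rfl fun j hj => ?_
          simp only [Finset.mem_Icc] at hj
          have hpow : (s⁻¹) ^ ((l : ℕ) - i) * s ^ (j - i)
              = (if j ≤ (l : ℕ) then (s⁻¹) ^ ((l : ℕ) - j) else s ^ (j - (l : ℕ))) := by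
            by_cases hjl : j ≤ (l : ℕ)
            · rw [if_pos hjl]
              have h1 : (l : ℕ) - i = ((l : ℕ) - j) + (j - i) := by omega
              rw [h1, pow_add, mul_assoc, ← mul_pow, inv_mul_cancel₀ hs, one_pow, mul_one]
            · rw [if_neg hjl]
              have h1 : j - i = (j - (l : ℕ)) + ((l : ℕ) - i) := by omega
              rw [h1, pow_add]
              calc (s⁻¹) ^ ((l:ℕ) - i) * (s ^ (j - (l:ℕ)) * s ^ ((l:ℕ) - i))
                  = s ^ (j - (l:ℕ)) * ((s⁻¹) ^ ((l:ℕ) - i) * s ^ ((l:ℕ) - i)) := by ring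
                _ = s ^ (j - (l:ℕ)) := by
                    rw [← mul_pow, inv_mul_cancel₀ hs, one_pow, mul_one]
          calc (s⁻¹) ^ ((l:ℕ) - i) / (((l:ℕ) - i).factorial : k) * (Bc j i * s ^ (j - i))
              = ((s⁻¹) ^ ((l:ℕ) - i) * s ^ (j - i)) * (Bc j i / (((l:ℕ) - i).factorial : k)) := by
                ring
            _ = _ := by rw [hpow]
        rw [Finset.sum_congr rfl step1, Finset.sum_comm]
        have step2 : ∀ j ∈ Finset.Icc (m + 1) (2 * m + 1),
            ∑ i ∈ range (m + 1),
                (if j ≤ (l : ℕ) then (s⁻¹) ^ ((l : ℕ) - j) else s ^ (j - (l : ℕ)))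
                  * (Bc j i / (((l : ℕ) - i).factorial : k))
              = (if j ≤ (l : ℕ) then (s⁻¹) ^ ((l : ℕ) - j) else s ^ (j - (l : ℕ)))
                  * (b' j * (if (l : ℕ) = j then 1 else 0)
                    + a' j * (if j ≤ (l : ℕ) then -(1 / (((l : ℕ) - j).factorial : k)) else 0)) := by
          intro j hj
          simp only [Finset.mem_Icc] at hj
          rw [← Finset.mul_sum]
          congr 1
          have hterm : ∀ i ∈ range (m + 1),
              Bc j i / (((l : ℕ) - i).factorial : k)
                = b' j * (c j i / (((l : ℕ) - i).factorial : k))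
                  + a' j * (g j i / (((l : ℕ) - i).factorial : k)) := by
            intro i _
            rw [hBc]; simp only []; ring
          rw [Finset.sum_congr rfl hterm, Finset.sum_add_distrib, ← Finset.mul_sum,
            ← Finset.mul_sum]
          rw [hc j (l : ℕ) (by omega) (by omega)]
          congr 1
          congr 1
          have hL2 := GaAux.L2 m j (c j) (hc j) (l : ℕ) (by omega) (by omega) (by omega)
          simp only [hg, hd]
          exact hL2
        rw [Finset.sum_congr rfl step2]
        have expand : ∀ j ∈ Finset.Icc (m + 1) (2 * m + 1),
            (if j ≤ (l : ℕ) then (s⁻¹) ^ ((l : ℕ) - j) else s ^ (j - (l : ℕ)))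
                * (b' j * (if (l : ℕ) = j then 1 else 0)
                  + a' j * (if j ≤ (l : ℕ) then -(1 / (((l : ℕ) - j).factorial : k)) else 0))
              = (if (l : ℕ) = j then b' j else 0)
                + (if j ≤ (l : ℕ) then
                    -(a' j * ((s⁻¹) ^ ((l : ℕ) - j) / (((l : ℕ) - j).factorial : k))) else 0) := by
          intro j hj
          simp only [Finset.mem_Icc] at hj
          by_cases hjl : j ≤ (l : ℕ)
          · rw [if_pos hjl, if_pos hjl, if_pos hjl]
            by_cases hlj : (l : ℕ) = j
            · rw [if_pos hlj, if_pos hlj, hlj, Nat.sub_self, pow_zero]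
              ring
            · rw [if_neg hlj, if_neg hlj]
              ring
          · rw [if_neg hjl, if_neg hjl, if_neg hjl]
            have hlj : ¬ ((l : ℕ) = j) := by omega
            rw [if_neg hlj, if_neg hlj]
            ring
        rw [Finset.sum_congr rfl expand, Finset.sum_add_distrib]
        have hfirst : ∑ j ∈ Finset.Icc (m + 1) (2 * m + 1),
            (if (l : ℕ) = j then b' j else 0) = b l := by
          rw [Finset.sum_ite_eq (Finset.Icc (m + 1) (2 * m + 1)) (l : ℕ) b',
            if_pos (by simp only [Finset.mem_Icc]; omega), hbb]
        have hsecond : ∑ j ∈ Finset.Icc (m + 1) (2 * m + 1),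
            (if j ≤ (l : ℕ) then
              -(a' j * ((s⁻¹) ^ ((l : ℕ) - j) / (((l : ℕ) - j).factorial : k))) else 0)
              = -∑ j ∈ Finset.Icc (m + 1) (l : ℕ),
                  a' j * ((s⁻¹) ^ ((l : ℕ) - j) / (((l : ℕ) - j).factorial : k)) := by
          rw [← Finset.sum_filter]
          have hfil : (Finset.Icc (m + 1) (2 * m + 1)).filter (fun j => j ≤ (l : ℕ))
              = Finset.Icc (m + 1) (l : ℕ) := by
            ext x
            simp only [Finset.mem_filter, Finset.mem_Icc]
            omega
          rw [hfil, Finset.sum_neg_distrib]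
        rw [hfirst, hsecond]
        ring
      rw [hpart1]
      ring
  -- the polynomial Q obtained by composing P with the curve
  set Q : Polynomial k := MvPolynomial.aeval
    (Sum.elim (fun l : Fin (2 * m + 1 + 1) => xF (l : ℕ))
      (fun l : Fin (2 * m + 1 + 1) => wF (l : ℕ))) P with hQdef
  have hQev : ∀ s : k, Q.eval s = MvPolynomial.eval
      (Sum.elim (fun l : Fin (2 * m + 1 + 1) => (xF (l : ℕ)).eval s)
        (fun l : Fin (2 * m + 1 + 1) => (wF (l : ℕ)).eval s)) P := by
    intro s
    rw [hQdef]
    have h1 : Q.eval s = (Polynomial.aeval s) Q := by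
      rw [Polynomial.coe_aeval_eq_eval]
    rw [← hQdef, h1, hQdef, MvPolynomial.comp_aeval_apply]
    have h2 : (fun i => (Polynomial.aeval s)
        ((Sum.elim (fun l : Fin (2 * m + 1 + 1) => xF (l : ℕ))
          (fun l : Fin (2 * m + 1 + 1) => wF (l : ℕ))) i))
        = Sum.elim (fun l : Fin (2 * m + 1 + 1) => (xF (l : ℕ)).eval s)
            (fun l : Fin (2 * m + 1 + 1) => (wF (l : ℕ)).eval s) := by
      funext i
      cases i with
      | inl v => simp [Polynomial.coe_aeval_eq_eval]
      | inr v => simp [Polynomial.coe_aeval_eq_eval]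
    rw [h2, ← MvPolynomial.coe_aeval_eq_eval]
    rfl
  have hzero : ∀ s : k, s ≠ 0 → Q.eval s = 0 := by
    intro s hs
    rw [hQev s]
    have hx := hP (fun l => (xF (l : ℕ)).eval s) s⁻¹
    rw [key s hs] at hx
    exact hx
  have hQX : Q * Polynomial.X = 0 := by
    apply Polynomial.funext
    intro r
    rw [Polynomial.eval_mul, Polynomial.eval_X, Polynomial.eval_zero]
    by_cases hr : r = 0
    · rw [hr, mul_zero]
    · rw [hzero r hr, zero_mul]
  have hQ0 : Q = 0 := by
    rcases mul_eq_zero.mp hQX with h | h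
    · exact h
    · exact absurd h Polynomial.X_ne_zero
  have hfin := hQev 0
  rw [hQ0, Polynomial.eval_zero] at hfin
  have hcurve0 : Sum.elim (fun l : Fin (2 * m + 1 + 1) => (xF (l : ℕ)).eval 0)
      (fun l : Fin (2 * m + 1 + 1) => (wF (l : ℕ)).eval 0) = Sum.elim a b := by
    funext i
    cases i with
    | inl v => exact hx0 v
    | inr v => exact hw0 v
  rw [hcurve0] at hfin
  exact hfin.symm
end

section
/- Let m ≥ 3 be odd, n = 2m, and consider the basic G_a-action on V = k^{n+1} over an algebraically closed field k of characteristic zero. Let a = e_m (the m-th standard basis vector) and b = e_m + e_{m+1}. Then a and b are not separated by any polynomial invariant of the action (i.e., f(a) = f(b) for all invariant polynomials f), yet (a,b) is not in the graph of the action and b_m ≠ (-1)^m a_m. -/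
open Finset Polynomial

namespace SepAux

variable (k : Type*) [Field k] [CharZero k]

/-- iterated forward difference of zero function -/
lemma fd_zero (n : ℕ) : (fwdDiff (1:k))^[n] (fun _ => (0:k)) = fun _ => 0 := by
  induction n with
  | zero => rfl
  | succ n ih =>
    rw [Function.iterate_succ_apply]
    have : fwdDiff (1:k) (fun _ => (0:k)) = fun _ => (0:k) := by
      funext x; simp [fwdDiff]
    rw [this, ih]

/-- m-th forward difference of x^i, i ≤ m -/
lemma fd_pow (n : ℕ) : ∀ i ≤ n, (fwdDiff (1:k))^[n] (fun x : k => x ^ i)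
    = fun _ => if i = n then (n.factorial : k) else 0 := by
  induction n with
  | zero =>
    intro i hi
    interval_cases i
    simp [Nat.factorial]
  | succ n ih =>
    intro i hi
    rw [Function.iterate_succ_apply]
    have hfd : fwdDiff (1:k) (fun x : k => x ^ i)
        = fun x : k => ∑ j ∈ range i, (i.choose j : k) * x ^ j := by
      funext x
      simp only [fwdDiff]
      rw [add_pow]
      rw [Finset.sum_range_succ]
      simp [mul_comm]
    rw [hfd]
    have hsum : (fun x : k => ∑ j ∈ range i, (i.choose j : k) * x ^ j)
        = fun x : k => ∑ j ∈ range i, ((i.choose j : k) • (fun y : k => y ^ j)) x := by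
      funext x; simp [smul_eq_mul]
    rw [hsum]
    have hfn : (fun x : k => ∑ j ∈ range i, ((i.choose j : k) • fun y : k => y ^ j) x)
        = ∑ j ∈ range i, ((i.choose j : k) • fun y : k => y ^ j) := by
      funext x; rw [Finset.sum_apply]
    rw [hfn, fwdDiff_iter_finset_sum]
    rw [show (∑ j ∈ range i, (fwdDiff (1:k))^[n] ((i.choose j : k) • fun y : k => y ^ j))
        = fun y : k => ∑ j ∈ range i, ((fwdDiff (1:k))^[n] ((i.choose j : k) • fun y : k => y ^ j)) y
      from by funext x; rw [Finset.sum_apply]]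
    funext y
    have : ∀ j ∈ range i, ((fwdDiff (1:k))^[n] ((i.choose j : k) • fun y : k => y ^ j)) y
        = (i.choose j : k) * (if j = n then (n.factorial : k) else 0) := by
      intro j hj
      have hj' : j < i := Finset.mem_range.mp hj
      rw [fwdDiff_iter_const_smul]
      rw [ih j (by omega : j ≤ n)]
      simp [smul_eq_mul]
    rw [Finset.sum_congr rfl this]
    simp only [mul_ite, mul_zero]
    rw [Finset.sum_ite_eq' (range i) n (fun j => (i.choose j : k) * (n.factorial : k))]
    by_cases hin : i = n + 1
    · subst hin
      simp [Nat.choose_succ_self_right, Nat.factorial_succ]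
    · have h2 : ¬ n < i := by omega
      rw [if_neg hin]
      simp only [Finset.mem_range]
      rw [if_neg h2]

/-- finite-difference evaluation of a polynomial of degree ≤ m -/
lemma fd_eval_poly (m : ℕ) (q : Polynomial k) (hq : q.natDegree ≤ m) :
    ∑ r ∈ range (m+1), (-1:k)^(m-r) * (m.choose r : k) * q.eval (r : k)
      = (m.factorial : k) * q.coeff m := by
  have hF : (fun x : k => q.eval x)
      = fun x : k => ∑ i ∈ range (m+1), ((q.coeff i) • fun y : k => y ^ i) x := by
    funext x
    rw [Polynomial.eval_eq_sum_range' (by omega : q.natDegree < m + 1)]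
    simp [smul_eq_mul]
  have hfd : (fwdDiff (1:k))^[m] (fun x : k => q.eval x) = fun _ => (m.factorial : k) * q.coeff m := by
    rw [hF]
    have hfn : (fun x : k => ∑ i ∈ range (m+1), ((q.coeff i) • fun y : k => y ^ i) x)
        = ∑ i ∈ range (m+1), ((q.coeff i) • fun y : k => y ^ i) := by
      funext x; rw [Finset.sum_apply]
    rw [hfn, fwdDiff_iter_finset_sum]
    rw [show (∑ i ∈ range (m+1), (fwdDiff (1:k))^[m] ((q.coeff i) • fun y : k => y ^ i))
        = fun y : k => ∑ i ∈ range (m+1), ((fwdDiff (1:k))^[m] ((q.coeff i) • fun y : k => y ^ i)) y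
      from by funext x; rw [Finset.sum_apply]]
    funext y
    have : ∀ i ∈ range (m+1), ((fwdDiff (1:k))^[m] ((q.coeff i) • fun y : k => y ^ i)) y
        = q.coeff i * (if i = m then (m.factorial : k) else 0) := by
      intro i hi
      rw [fwdDiff_iter_const_smul, fd_pow k m i (by simp at hi; omega)]
      simp [smul_eq_mul]
    rw [Finset.sum_congr rfl this]
    simp only [mul_ite, mul_zero]
    rw [Finset.sum_ite_eq' (range (m+1)) m (fun i => q.coeff i * (m.factorial : k))]
    simp [mul_comm]
  have := fwdDiff_iter_eq_sum_shift (1:k) (fun x : k => q.eval x) m 0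
  rw [hfd] at this
  simp only [zero_add, nsmul_eq_mul, mul_one, zsmul_eq_mul] at this
  rw [this]
  apply Finset.sum_congr rfl
  intro r hr
  push_cast
  ring


/-- The Padé-type coefficients of the curve. -/
noncomputable def cc (m i : ℕ) : k :=
  (-1:k)^(m-i) * ((2*m-i).factorial : k) / ((i.factorial : k) * ((m-i).factorial : k))

lemma fact_mul_prod (a d : ℕ) : a.factorial * ∏ l ∈ range d, (a + l + 1) = (a + d).factorial := by
  induction d with
  | zero => simp
  | succ d ih =>
    rw [Finset.prod_range_succ, ← mul_assoc, ih,
      show a + (d+1) = (a+d)+1 by omega, Nat.factorial_succ]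
    ring

/-- auxiliary polynomial -/
noncomputable def Q (m p : ℕ) : Polynomial k :=
  ∏ l ∈ range (m-p), (Polynomial.X + Polynomial.C ((p+l+1 : ℕ) : k))

lemma Q_monic (m p : ℕ) : (Q k m p).Monic :=
  Polynomial.monic_prod_of_monic _ _ (fun l _ => Polynomial.monic_X_add_C _)

lemma Q_natDegree (m p : ℕ) : (Q k m p).natDegree = m - p := by
  rw [Q, Polynomial.natDegree_prod_of_monic _ _ (fun l _ => Polynomial.monic_X_add_C _)]
  rw [Finset.sum_congr rfl (fun l _ => Polynomial.natDegree_X_add_C _)]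
  simp

lemma fact_cast_ne_zero (n : ℕ) : ((n.factorial : k)) ≠ 0 :=
  Nat.cast_ne_zero.mpr (Nat.factorial_ne_zero n)

lemma Q_eval (m p r : ℕ) (hp : p ≤ m) :
    (Q k m p).eval (r : k) = ((m + r).factorial : k) / ((p + r).factorial : k) := by
  rw [Q, Polynomial.eval_prod]
  have h1 : ∀ l ∈ range (m-p), Polynomial.eval (r:k) (Polynomial.X + Polynomial.C ((p+l+1:ℕ):k))
      = ((p + r + l + 1 : ℕ) : k) := by
    intro l _
    simp only [Polynomial.eval_add, Polynomial.eval_X, Polynomial.eval_C]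
    push_cast; ring
  rw [Finset.prod_congr rfl h1, ← Nat.cast_prod]
  have h := fact_mul_prod (p + r) (m - p)
  rw [show p + r + (m - p) = m + r by omega] at h
  rw [eq_div_iff (fact_cast_ne_zero k _)]
  have h' : (∏ l ∈ range (m-p), (p + r + l + 1)) * (p+r).factorial = (m+r).factorial := by
    rw [mul_comm]; exact h
  exact_mod_cast h' 

lemma key1 (m J : ℕ) (hodd : Odd m) (h1 : m ≤ J) (h2 : J ≤ 2*m) :
    ∑ i ∈ range (m+1), cc k m i / ((J - i).factorial : k) = if J = m then -1 else 0 := by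
  have hpm : J - m ≤ m := by omega
  set p := J - m with hp
  have hQd : (Q k m p).natDegree ≤ m := by rw [Q_natDegree]; omega
  have hFD := fd_eval_poly k m (Q k m p) hQd
  have hcoeff : (Q k m p).coeff m = if J = m then 1 else 0 := by
    by_cases h : J = m
    · have hp0 : p = 0 := by omega
      rw [if_pos h, hp0]
      have := (Q_monic k m 0).coeff_natDegree
      rwa [Q_natDegree, Nat.sub_zero] at this
    · rw [if_neg h]
      exact Polynomial.coeff_eq_zero_of_natDegree_lt (by rw [Q_natDegree]; omega)
  have key : (∑ i ∈ range (m+1), cc k m i / ((J - i).factorial : k)) * ((-1:k)^m * (m.factorial : k))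
      = ∑ r ∈ range (m+1), (-1:k)^(m-r) * (m.choose r : k) * (Q k m p).eval (r:k) := by
    rw [Finset.sum_mul, ← Finset.sum_range_reflect]
    apply Finset.sum_congr rfl
    intro r hr
    have hrm : r ≤ m := by simp at hr; omega
    have e1 : m - (m + 1 - 1 - r) = r := by omega
    have e2 : 2*m - (m + 1 - 1 - r) = m + r := by omega
    have e3 : J - (m + 1 - 1 - r) = p + r := by omega
    rw [Q_eval k m p r hpm, cc, e1, e2, e3]
    have hch : ((m.choose r : k)) * ((m-r).factorial : k) * (r.factorial : k) = (m.factorial : k) := by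
      have h0 : m.choose r * (m-r).factorial * r.factorial = m.factorial := by
        rw [mul_assoc, mul_comm ((m-r).factorial), ← mul_assoc]
        exact Nat.choose_mul_factorial_mul_factorial hrm
      exact_mod_cast h0
    have hs : (-1:k)^(m-r) = (-1:k)^m * (-1:k)^r := by
      rw [← pow_add, show m + r = (m-r) + 2*r by omega, pow_add, pow_mul]
      norm_num
    rw [hs, ← hch]
    have hmr := fact_cast_ne_zero k (m-r)
    have hrf := fact_cast_ne_zero k r
    have hpr := fact_cast_ne_zero k (p+r)
    field_simp
    ring_nf
    rw [show 1 + m - 1 - r = m - r by omega, mul_inv_cancel_right₀ hmr]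
  rw [hFD, hcoeff] at key
  have hm1 : (-1:k)^m = -1 := hodd.neg_one_pow
  have hmf := fact_cast_ne_zero k m
  rw [hm1] at key
  have hgoal : (∑ i ∈ range (m+1), cc k m i / ((J - i).factorial : k)) * (m.factorial : k)
      = (if J = m then -1 else 0) * (m.factorial : k) := by
    by_cases h : J = m
    · rw [if_pos h] at key ⊢
      linear_combination -key
    · rw [if_neg h] at key ⊢
      linear_combination -key
  exact mul_right_cancel₀ hmf hgoal

lemma key2 (m J : ℕ) (hodd : Odd m) (h1 : m + 1 ≤ J) (h2 : J ≤ 2*m) :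
    ∑ i ∈ range (m+1), ((m - i : ℕ) : k) * cc k m i / ((J - i).factorial : k)
      = if J = m+1 then -1 else 0 := by
  have hpm : J - m ≤ m := by omega
  set p := J - m with hp
  have hp1 : 1 ≤ p := by omega
  set Q' : Polynomial k := Polynomial.X * Q k m p with hQ'
  have hQ'm : Q'.Monic := (Polynomial.monic_X).mul (Q_monic k m p)
  have hQ'd : Q'.natDegree = m - p + 1 := by
    rw [hQ', (Polynomial.monic_X).natDegree_mul (Q_monic k m p), Q_natDegree,
      Polynomial.natDegree_X]
    omega
  have hQd : Q'.natDegree ≤ m := by omega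
  have hFD := fd_eval_poly k m Q' hQd
  have hcoeff : Q'.coeff m = if J = m+1 then 1 else 0 := by
    by_cases h : J = m+1
    · have hp0 : p = 1 := by omega
      rw [if_pos h]
      have := hQ'm.coeff_natDegree
      rwa [hQ'd, hp0, show m - 1 + 1 = m by omega] at this
    · rw [if_neg h]
      exact Polynomial.coeff_eq_zero_of_natDegree_lt (by omega)
  have key : (∑ i ∈ range (m+1), ((m - i : ℕ) : k) * cc k m i / ((J - i).factorial : k))
        * ((-1:k)^m * (m.factorial : k))
      = ∑ r ∈ range (m+1), (-1:k)^(m-r) * (m.choose r : k) * Q'.eval (r:k) := by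
    rw [Finset.sum_mul, ← Finset.sum_range_reflect]
    apply Finset.sum_congr rfl
    intro r hr
    have hrm : r ≤ m := by simp at hr; omega
    have e1 : m - (m + 1 - 1 - r) = r := by omega
    have e2 : 2*m - (m + 1 - 1 - r) = m + r := by omega
    have e3 : J - (m + 1 - 1 - r) = p + r := by omega
    rw [hQ', Polynomial.eval_mul, Polynomial.eval_X, Q_eval k m p r hpm, cc, e1, e2, e3]
    have hch : ((m.choose r : k)) * ((m-r).factorial : k) * (r.factorial : k) = (m.factorial : k) := by
      have h0 : m.choose r * (m-r).factorial * r.factorial = m.factorial := by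
        rw [mul_assoc, mul_comm ((m-r).factorial), ← mul_assoc]
        exact Nat.choose_mul_factorial_mul_factorial hrm
      exact_mod_cast h0
    have hs : (-1:k)^(m-r) = (-1:k)^m * (-1:k)^r := by
      rw [← pow_add, show m + r = (m-r) + 2*r by omega, pow_add, pow_mul]
      norm_num
    rw [hs, ← hch]
    have hmr := fact_cast_ne_zero k (m-r)
    have hrf := fact_cast_ne_zero k r
    have hpr := fact_cast_ne_zero k (p+r)
    field_simp
    ring_nf
    rw [show 1 + m - 1 - r = m - r by omega, mul_inv_cancel_right₀ hmr]
  rw [hFD, hcoeff] at key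
  have hm1 : (-1:k)^m = -1 := hodd.neg_one_pow
  have hmf := fact_cast_ne_zero k m
  rw [hm1] at key
  have hgoal : (∑ i ∈ range (m+1), ((m - i : ℕ) : k) * cc k m i / ((J - i).factorial : k))
        * (m.factorial : k)
      = (if J = m+1 then -1 else 0) * (m.factorial : k) := by
    by_cases h : J = m+1
    · rw [if_pos h] at key ⊢
      linear_combination -key
    · rw [if_neg h] at key ⊢
      linear_combination -key
  exact mul_right_cancel₀ hmf hgoal


noncomputable def Afun (m J : ℕ) : k :=
  ∑ i ∈ range (min J m + 1), cc k m i / ((J - i).factorial : k)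

noncomputable def Efun (m J : ℕ) : k :=
  ∑ i ∈ range (min J m + 1), ((m - i : ℕ) : k) * cc k m i / ((J - i).factorial : k)

lemma Afun_eq_key (m J : ℕ) (hodd : Odd m) (h1 : m ≤ J) (h2 : J ≤ 2*m) :
    Afun k m J = if J = m then -1 else 0 := by
  rw [Afun, Nat.min_eq_right h1]
  exact key1 k m J hodd h1 h2

lemma Efun_eq_key (m J : ℕ) (hodd : Odd m) (h1 : m + 1 ≤ J) (h2 : J ≤ 2*m) :
    Efun k m J = if J = m + 1 then -1 else 0 := by
  rw [Efun, Nat.min_eq_right (by omega)]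
  exact key2 k m J hodd h1 h2

lemma cc_self (m : ℕ) : cc k m m = 1 := by
  rw [cc]
  simp [Nat.sub_self, show 2*m - m = m by omega]
  exact Nat.factorial_ne_zero m

lemma base (m : ℕ) (hodd : Odd m) (s : k) (hs : s ≠ 0) (J : ℕ) (hJ : J ≤ 2*m) :
    ∑ i ∈ range (J+1),
        (1/s)^(J-i) / ((J-i).factorial : k) * (if i ≤ m then cc k m i * s^(m-i) else 0)
      = if J ≤ m then Afun k m J * s^(m-J) else 0 := by
  by_cases hJm : J ≤ m
  · rw [if_pos hJm]
    have h1 : ∀ i ∈ range (J+1), (1/s)^(J-i)/((J-i).factorial : k)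
          * (if i ≤ m then cc k m i * s^(m-i) else 0)
        = cc k m i / ((J-i).factorial : k) * s^(m-J) := by
      intro i hi
      have hiJ : i ≤ J := by simp at hi; omega
      rw [if_pos (le_trans hiJ hJm)]
      rw [show s^(m-i) = s^(J-i) * s^(m-J) by rw [← pow_add]; congr 1; omega]
      rw [one_div, inv_pow]
      have hss : s ^ (J-i) * s⁻¹ ^ (J-i) = 1 := by
        rw [← mul_pow, mul_inv_cancel₀ hs, one_pow]
      field_simp
    rw [Finset.sum_congr rfl h1, ← Finset.sum_mul, Afun, Nat.min_eq_left hJm]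
  · rw [if_neg hJm]
    push_neg at hJm
    have hsub : range (m+1) ⊆ range (J+1) := by
      apply Finset.range_subset_range.mpr; omega
    have htr : ∑ i ∈ range (J+1), (1/s)^(J-i)/((J-i).factorial : k)
          * (if i ≤ m then cc k m i * s^(m-i) else 0)
        = ∑ i ∈ range (m+1), (1/s)^(J-i)/((J-i).factorial : k)
          * (if i ≤ m then cc k m i * s^(m-i) else 0) := by
      refine (Finset.sum_subset hsub ?_).symm
      intro x _ hx
      rw [if_neg (by simp at hx; omega), mul_zero]
    rw [htr]
    have h1 : ∀ i ∈ range (m+1), (1/s)^(J-i)/((J-i).factorial : k)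
          * (if i ≤ m then cc k m i * s^(m-i) else 0)
        = (1/s)^(J-m) * (cc k m i / ((J-i).factorial : k)) := by
      intro i hi
      have him : i ≤ m := by simp at hi; omega
      rw [if_pos him]
      rw [show (1/s)^(J-i) = (1/s)^(J-m) * (1/s)^(m-i) by rw [← pow_add]; congr 1; omega]
      rw [one_div, inv_pow, inv_pow]
      have hss : s ^ (m-i) * s⁻¹ ^ (m-i) = 1 := by
        rw [← mul_pow, mul_inv_cancel₀ hs, one_pow]
      field_simp
    rw [Finset.sum_congr rfl h1, ← Finset.mul_sum]
    have : ∑ i ∈ range (m+1), cc k m i / ((J-i).factorial : k) = Afun k m J := by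
      rw [Afun, Nat.min_eq_right (by omega)]
    rw [this, Afun_eq_key k m J hodd (by omega) hJ, if_neg (by omega), mul_zero]

lemma baseE (m : ℕ) (hodd : Odd m) (s : k) (hs : s ≠ 0) (J : ℕ) (hJ : J ≤ 2*m) :
    ∑ i ∈ range (J+1),
        (1/s)^(J-i) / ((J-i).factorial : k)
          * (if i ≤ m then ((m - i : ℕ) : k) * cc k m i * s^(m-i) else 0)
      = if J ≤ m then Efun k m J * s^(m-J) else (if J = m + 1 then -(1/s) else 0) := by
  by_cases hJm : J ≤ m
  · rw [if_pos hJm]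
    have h1 : ∀ i ∈ range (J+1), (1/s)^(J-i)/((J-i).factorial : k)
          * (if i ≤ m then ((m - i : ℕ) : k) * cc k m i * s^(m-i) else 0)
        = ((m - i : ℕ) : k) * cc k m i / ((J-i).factorial : k) * s^(m-J) := by
      intro i hi
      have hiJ : i ≤ J := by simp at hi; omega
      rw [if_pos (le_trans hiJ hJm)]
      rw [show s^(m-i) = s^(J-i) * s^(m-J) by rw [← pow_add]; congr 1; omega]
      rw [one_div, inv_pow]
      have hss : s ^ (J-i) * s⁻¹ ^ (J-i) = 1 := by
        rw [← mul_pow, mul_inv_cancel₀ hs, one_pow]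
      field_simp
    rw [Finset.sum_congr rfl h1, ← Finset.sum_mul, Efun, Nat.min_eq_left hJm]
  · rw [if_neg hJm]
    push_neg at hJm
    have hsub : range (m+1) ⊆ range (J+1) := by
      apply Finset.range_subset_range.mpr; omega
    have htr : ∑ i ∈ range (J+1), (1/s)^(J-i)/((J-i).factorial : k)
          * (if i ≤ m then ((m - i : ℕ) : k) * cc k m i * s^(m-i) else 0)
        = ∑ i ∈ range (m+1), (1/s)^(J-i)/((J-i).factorial : k)
          * (if i ≤ m then ((m - i : ℕ) : k) * cc k m i * s^(m-i) else 0) := by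
      refine (Finset.sum_subset hsub ?_).symm
      intro x _ hx
      rw [if_neg (by simp at hx; omega), mul_zero]
    rw [htr]
    have h1 : ∀ i ∈ range (m+1), (1/s)^(J-i)/((J-i).factorial : k)
          * (if i ≤ m then ((m - i : ℕ) : k) * cc k m i * s^(m-i) else 0)
        = (1/s)^(J-m) * (((m - i : ℕ) : k) * cc k m i / ((J-i).factorial : k)) := by
      intro i hi
      have him : i ≤ m := by simp at hi; omega
      rw [if_pos him]
      rw [show (1/s)^(J-i) = (1/s)^(J-m) * (1/s)^(m-i) by rw [← pow_add]; congr 1; omega]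
      rw [one_div, inv_pow, inv_pow]
      have hss : s ^ (m-i) * s⁻¹ ^ (m-i) = 1 := by
        rw [← mul_pow, mul_inv_cancel₀ hs, one_pow]
      field_simp
    rw [Finset.sum_congr rfl h1, ← Finset.mul_sum]
    have : ∑ i ∈ range (m+1), ((m - i : ℕ) : k) * cc k m i / ((J-i).factorial : k)
        = Efun k m J := by
      rw [Efun, Nat.min_eq_right (by omega)]
    rw [this, Efun_eq_key k m J hodd (by omega) hJ]
    by_cases hJ1 : J = m + 1
    · rw [if_pos hJ1, if_pos hJ1, hJ1, show m + 1 - m = 1 by omega, pow_one]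
      ring
    · rw [if_neg hJ1, if_neg hJ1, mul_zero]

lemma shift_sum (t : k) (W : ℕ → k) (J : ℕ) :
    ∑ i ∈ range (J+1), t^(J-i)/((J-i).factorial : k) * (if 1 ≤ i then W (i-1) else 0)
      = if 1 ≤ J then ∑ i ∈ range (J-1+1), t^(J-1-i)/((J-1-i).factorial : k) * W i else 0 := by
  rcases Nat.eq_zero_or_pos J with h0 | hpos
  · subst h0; simp
  · rw [if_pos (by omega : 1 ≤ J), Finset.sum_range_succ']
    have hz : t^(J-0)/((J-0).factorial : k) * (if 1 ≤ 0 then W (0-1) else 0) = 0 := by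
      norm_num
    rw [hz, add_zero]
    rw [show J - 1 + 1 = J by omega]
    apply Finset.sum_congr rfl
    intro i _
    rw [if_pos (by omega : 1 ≤ i + 1), show i + 1 - 1 = i by omega,
      show J - (i+1) = J - 1 - i by omega]

lemma gaAct_apply (m : ℕ) (t : k) (Z : ℕ → k) (j : Fin (2*m+1)) :
    gaAct k (2*m) t (fun i => Z (i : ℕ)) j
      = ∑ i ∈ range ((j:ℕ)+1), t^((j:ℕ)-i)/(((j:ℕ)-i).factorial : k) * Z i := by
  simp only [gaAct]
  refine Finset.sum_bij' (fun (x : Fin (2*m+1)) _ => (x : ℕ))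
    (fun (x : ℕ) hx => (⟨x, by simp at hx; omega⟩ : Fin (2*m+1))) ?_ ?_ ?_ ?_ ?_
  · intro x hx
    simp only [Finset.mem_Iic] at hx
    simp only [Finset.mem_range]
    exact Nat.lt_succ_of_le (Fin.le_iff_val_le_val.mp hx)
  · intro x hx
    simp only [Finset.mem_range] at hx
    simp only [Finset.mem_Iic]
    exact Fin.le_iff_val_le_val.mpr (by simpa using Nat.lt_succ_iff.mp hx)
  · intro x hx; rfl
  · intro x hx; rfl
  · intro x hx; rfl


/-! ### the two explicit curves -/

noncomputable def xv1 (m : ℕ) (s : k) (i : ℕ) : k :=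
  (if i ≤ m then cc k m i * s^(m-i) else 0)
    + s * (if i ≤ m then ((m-i : ℕ) : k) * cc k m i * s^(m-i) else 0)

noncomputable def yv1 (m : ℕ) (s : k) (j : ℕ) : k :=
  if j ≤ m then (Afun k m j + Efun k m j * s) * s^(m-j)
  else if j = m+1 then -1 else 0

noncomputable def xv2 (m : ℕ) (s : k) (i : ℕ) : k :=
  (if i ≤ m then cc k m i * s^(m-i) else 0)
    + (if 1 ≤ i then (if i-1 ≤ m then cc k m (i-1) * s^(m-(i-1)) else 0) else 0)

noncomputable def yv2 (m : ℕ) (s : k) (j : ℕ) : k :=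
  (if j ≤ m then Afun k m j * s^(m-j) else 0)
    + (if 1 ≤ j then (if j-1 ≤ m then Afun k m (j-1) * s^(m-(j-1)) else 0) else 0)

lemma curve1 (m : ℕ) (hodd : Odd m) (s : k) (hs : s ≠ 0) (j : Fin (2*m+1)) :
    gaAct k (2*m) (1/s) (fun i => xv1 k m s (i : ℕ)) j = yv1 k m s (j : ℕ) := by
  rw [gaAct_apply k m (1/s) (xv1 k m s) j]
  have hJ : (j : ℕ) ≤ 2*m := by omega
  simp only [xv1, mul_add]
  rw [Finset.sum_add_distrib]
  have h2 : ∀ i ∈ range ((j:ℕ)+1),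
      (1/s)^((j:ℕ)-i) / (((j:ℕ)-i).factorial : k)
          * (s * (if i ≤ m then ((m-i : ℕ) : k) * cc k m i * s^(m-i) else 0))
        = s * ((1/s)^((j:ℕ)-i) / (((j:ℕ)-i).factorial : k)
          * (if i ≤ m then ((m-i : ℕ) : k) * cc k m i * s^(m-i) else 0)) := by
    intro i _; ring
  rw [Finset.sum_congr rfl h2, ← Finset.mul_sum]
  rw [base k m hodd s hs (j:ℕ) hJ, baseE k m hodd s hs (j:ℕ) hJ]
  by_cases h1 : (j : ℕ) ≤ m
  · rw [yv1, if_pos h1, if_pos h1, if_pos h1]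
    ring
  · rw [yv1, if_neg h1, if_neg h1, if_neg h1]
    by_cases hj2 : (j:ℕ) = m + 1
    · rw [if_pos hj2, if_pos hj2]
      field_simp
      norm_num
    · rw [if_neg hj2, if_neg hj2, mul_zero, add_zero]

lemma curve2 (m : ℕ) (hodd : Odd m) (s : k) (hs : s ≠ 0) (j : Fin (2*m+1)) :
    gaAct k (2*m) (1/s) (fun i => xv2 k m s (i : ℕ)) j = yv2 k m s (j : ℕ) := by
  rw [gaAct_apply k m (1/s) (xv2 k m s) j]
  have hJ : (j : ℕ) ≤ 2*m := by omega
  simp only [xv2, mul_add]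
  rw [Finset.sum_add_distrib]
  rw [base k m hodd s hs (j:ℕ) hJ]
  have h2 := shift_sum k (1/s) (fun n => if n ≤ m then cc k m n * s^(m-n) else 0) (j : ℕ)
  rw [h2]
  by_cases hj1 : 1 ≤ (j : ℕ)
  · rw [if_pos hj1]
    rw [base k m hodd s hs ((j:ℕ)-1) (by omega)]
    rw [yv2, if_pos hj1]
  · rw [if_neg hj1, yv2, if_neg hj1]

/-! ### values at `s = 0` -/

lemma xv1_zero (m i : ℕ) : xv1 k m (0:k) i = if i = m then 1 else 0 := by
  by_cases h : i ≤ m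
  · by_cases h2 : i = m
    · subst h2
      simp [xv1, cc_self]
    · simp [xv1, h, h2, zero_pow (show m - i ≠ 0 by omega)]
  · simp [xv1, h, show i ≠ m by omega]

lemma yv1_zero (m j : ℕ) (hodd : Odd m) :
    yv1 k m (0:k) j = (if j = m then -1 else 0) + (if j = m+1 then -1 else 0) := by
  by_cases h : j ≤ m
  · by_cases h2 : j = m
    · subst h2
      simp [yv1, Afun_eq_key k j j hodd le_rfl (by omega)]
    · simp [yv1, h, h2, zero_pow (show m - j ≠ 0 by omega), show j ≠ m + 1 by omega]
  · by_cases h2 : j = m+1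
    · simp [yv1, h, h2]
    · simp [yv1, h, h2, show j ≠ m by omega]

lemma xv2_zero (m i : ℕ) : xv2 k m (0:k) i
    = (if i = m then 1 else 0) + (if i = m+1 then 1 else 0) := by
  have hfirst : (if i ≤ m then cc k m i * (0:k)^(m-i) else 0) = if i = m then 1 else 0 := by
    by_cases h : i ≤ m
    · by_cases h2 : i = m
      · subst h2; simp [cc_self]
      · simp [h, h2, zero_pow (show m - i ≠ 0 by omega)]
    · simp [h, show i ≠ m by omega]
  have hsecond : (if 1 ≤ i then (if i-1 ≤ m then cc k m (i-1) * (0:k)^(m-(i-1)) else 0) else 0)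
      = if i = m+1 then 1 else 0 := by
    by_cases h0 : 1 ≤ i
    · by_cases h : i - 1 ≤ m
      · by_cases h2 : i - 1 = m
        · rw [if_pos h0, if_pos h, h2, cc_self]
          simp [show i = m + 1 by omega]
        · rw [if_pos h0, if_pos h, zero_pow (show m - (i-1) ≠ 0 by omega)]
          simp [show i ≠ m + 1 by omega]
      · simp [h0, h, show i ≠ m + 1 by omega]
    · simp [h0, show i ≠ m + 1 by omega]
  rw [xv2, hfirst, hsecond]

lemma yv2_zero (m j : ℕ) (hodd : Odd m) :
    yv2 k m (0:k) j = (if j = m then -1 else 0) + (if j = m+1 then -1 else 0) := by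
  have hfirst : (if j ≤ m then Afun k m j * (0:k)^(m-j) else 0) = if j = m then -1 else 0 := by
    by_cases h : j ≤ m
    · by_cases h2 : j = m
      · subst h2; simp [Afun_eq_key k j j hodd le_rfl (by omega)]
      · simp [h, h2, zero_pow (show m - j ≠ 0 by omega)]
    · simp [h, show j ≠ m by omega]
  have hsecond : (if 1 ≤ j then (if j-1 ≤ m then Afun k m (j-1) * (0:k)^(m-(j-1)) else 0) else 0)
      = if j = m+1 then -1 else 0 := by
    by_cases h0 : 1 ≤ j
    · by_cases h : j - 1 ≤ m
      · by_cases h2 : j - 1 = m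
        · rw [if_pos h0, if_pos h, h2]
          simp [Afun_eq_key k m m hodd le_rfl (by omega), show j = m + 1 by omega]
        · rw [if_pos h0, if_pos h, zero_pow (show m - (j-1) ≠ 0 by omega)]
          simp [show j ≠ m + 1 by omega]
      · simp [h0, h, show j ≠ m + 1 by omega]
    · simp [h0, show j ≠ m + 1 by omega]
  rw [yv2, hfirst, hsecond]

/-! ### polynomial lifts of the curves -/

noncomputable def PX1 (m i : ℕ) : Polynomial k :=
  if i ≤ m then Polynomial.C (cc k m i) * Polynomial.X^(m-i)
      + Polynomial.X * (Polynomial.C (((m-i : ℕ) : k) * cc k m i) * Polynomial.X^(m-i))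
  else 0

noncomputable def PY1 (m j : ℕ) : Polynomial k :=
  if j ≤ m then (Polynomial.C (Afun k m j) + Polynomial.C (Efun k m j) * Polynomial.X)
      * Polynomial.X^(m-j)
  else if j = m+1 then Polynomial.C (-1) else 0

noncomputable def PX2 (m i : ℕ) : Polynomial k :=
  (if i ≤ m then Polynomial.C (cc k m i) * Polynomial.X^(m-i) else 0)
    + (if 1 ≤ i then (if i-1 ≤ m then Polynomial.C (cc k m (i-1)) * Polynomial.X^(m-(i-1)) else 0)
      else 0)

noncomputable def PY2 (m j : ℕ) : Polynomial k :=
  (if j ≤ m then Polynomial.C (Afun k m j) * Polynomial.X^(m-j) else 0)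
    + (if 1 ≤ j then (if j-1 ≤ m then Polynomial.C (Afun k m (j-1)) * Polynomial.X^(m-(j-1)) else 0)
      else 0)

lemma PX1_eval (m i : ℕ) (s : k) : (PX1 k m i).eval s = xv1 k m s i := by
  by_cases h : i ≤ m <;> simp [PX1, xv1, h] <;> ring

lemma PY1_eval (m j : ℕ) (s : k) : (PY1 k m j).eval s = yv1 k m s j := by
  by_cases h : j ≤ m
  · simp [PY1, yv1, h]
  · by_cases h2 : j = m+1 <;> simp [PY1, yv1, h, h2]

lemma PX2_eval (m i : ℕ) (s : k) : (PX2 k m i).eval s = xv2 k m s i := by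
  by_cases h : i ≤ m <;> by_cases h0 : 1 ≤ i <;> by_cases h1 : i - 1 ≤ m <;>
    simp [PX2, xv2, h, h0, h1]

lemma PY2_eval (m j : ℕ) (s : k) : (PY2 k m j).eval s = yv2 k m s j := by
  by_cases h : j ≤ m <;> by_cases h0 : 1 ≤ j <;> by_cases h1 : j - 1 ≤ m <;>
    simp [PY2, yv2, h, h0, h1]

/-! ### evaluation of multivariate polynomials along polynomial curves -/

lemma eval_aeval {σ : Type*} (f : MvPolynomial σ k) (P : σ → Polynomial k) (s : k) :
    Polynomial.eval s (MvPolynomial.aeval P f)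
      = MvPolynomial.eval (fun i => Polynomial.eval s (P i)) f := by
  induction f using MvPolynomial.induction_on with
  | C a => simp
  | add p q hp hq => simp [hp, hq]
  | mul_X p i hp => simp [hp]

lemma infinite_ne_zero : ({x : k | x ≠ 0}).Infinite := by
  have h : ({x : k | x ≠ 0})ᶜ = {0} := by
    ext x; simp [not_not]
  exact Set.infinite_of_finite_compl (h ▸ Set.finite_singleton 0)

end SepAux


/-- Let `m ≥ 3` be odd, `n = 2m`, and consider the basic `G_a`-action on `k^{n+1}`
over an algebraically closed field `k` of characteristic zero. The points
`a = e_m` and `b = e_m + e_{m+1}` are not separated by any polynomial invariant,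
yet `(a,b)` is not in the graph of the action, and `b_m ≠ (-1)^m a_m`. -/
theorem invariants_do_not_separate (k : Type*) [Field k] [IsAlgClosed k] [CharZero k]
    (m : ℕ) (hm : 3 ≤ m) (hodd : Odd m)
    (a b : Fin (2 * m + 1) → k)
    (haa : a = fun i : Fin (2 * m + 1) => if (i : ℕ) = m then (1 : k) else 0)
    (hbb : b = fun i : Fin (2 * m + 1) =>
      (if (i : ℕ) = m then (1 : k) else 0) + (if (i : ℕ) = m + 1 then (1 : k) else 0)) :
    (∀ f : MvPolynomial (Fin (2 * m + 1)) k,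
      (∀ (t : k) (z : Fin (2 * m + 1) → k),
        MvPolynomial.eval (gaAct k (2 * m) t z) f = MvPolynomial.eval z f) →
      MvPolynomial.eval a f = MvPolynomial.eval b f) ∧
    (¬ ∃ t : k, gaAct k (2 * m) t a = b) ∧
    b ⟨m, by omega⟩ ≠ (-1 : k) ^ m * a ⟨m, by omega⟩ := by
  classical
  refine ⟨?_, ?_, ?_⟩
  · -- invariants do not separate
    intro f hf
    -- the common limit point
    set negb : Fin (2*m+1) → k :=
      fun j => (if (j:ℕ) = m then -1 else 0) + (if (j:ℕ) = m+1 then -1 else 0) with hnegb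
    -- curve 1 : from a to negb
    have hcurve : ∀ (PX PY : ℕ → Polynomial k),
        (∀ (s : k), s ≠ 0 → ∀ j : Fin (2*m+1),
          gaAct k (2*m) (1/s) (fun i => (PX (i:ℕ)).eval s) j = (PY (j:ℕ)).eval s) →
        MvPolynomial.eval (fun i : Fin (2*m+1) => (PX (i:ℕ)).eval 0) f
          = MvPolynomial.eval (fun j : Fin (2*m+1) => (PY (j:ℕ)).eval 0) f := by
      intro PX PY hrel
      have h1 : ∀ s : k, s ≠ 0 →
          Polynomial.eval s (MvPolynomial.aeval (fun i : Fin (2*m+1) => PX (i:ℕ)) f)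
            = Polynomial.eval s (MvPolynomial.aeval (fun j : Fin (2*m+1) => PY (j:ℕ)) f) := by
        intro s hs
        rw [SepAux.eval_aeval, SepAux.eval_aeval]
        have hgr : (fun j : Fin (2*m+1) => (PY (j:ℕ)).eval s)
            = gaAct k (2*m) (1/s) (fun i => (PX (i:ℕ)).eval s) := by
          funext j; exact (hrel s hs j).symm
        rw [hgr, hf (1/s) (fun i => (PX (i:ℕ)).eval s)]
      have heqp : MvPolynomial.aeval (fun i : Fin (2*m+1) => PX (i:ℕ)) f
          = MvPolynomial.aeval (fun j : Fin (2*m+1) => PY (j:ℕ)) f := by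
        apply Polynomial.eq_of_infinite_eval_eq
        apply Set.Infinite.mono _ (SepAux.infinite_ne_zero k)
        intro x hx
        exact h1 x hx
      have h0 := congrArg (Polynomial.eval 0) heqp
      rwa [SepAux.eval_aeval, SepAux.eval_aeval] at h0
    have hc1 := hcurve (SepAux.PX1 k m) (SepAux.PY1 k m) ?rel1
    have hc2 := hcurve (SepAux.PX2 k m) (SepAux.PY2 k m) ?rel2
    case rel1 =>
      intro s hs j
      have := SepAux.curve1 k m hodd s hs j
      have hx : (fun i : Fin (2*m+1) => (SepAux.PX1 k m (i:ℕ)).eval s)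
          = fun i : Fin (2*m+1) => SepAux.xv1 k m s (i:ℕ) := by
        funext i; exact SepAux.PX1_eval k m (i:ℕ) s
      rw [hx, this, SepAux.PY1_eval]
    case rel2 =>
      intro s hs j
      have := SepAux.curve2 k m hodd s hs j
      have hx : (fun i : Fin (2*m+1) => (SepAux.PX2 k m (i:ℕ)).eval s)
          = fun i : Fin (2*m+1) => SepAux.xv2 k m s (i:ℕ) := by
        funext i; exact SepAux.PX2_eval k m (i:ℕ) s
      rw [hx, this, SepAux.PY2_eval]
    -- rewrite the endpoints
    have hA : (fun i : Fin (2*m+1) => (SepAux.PX1 k m (i:ℕ)).eval 0) = a := by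
      rw [haa]; funext i
      rw [SepAux.PX1_eval, SepAux.xv1_zero]
    have hB : (fun i : Fin (2*m+1) => (SepAux.PX2 k m (i:ℕ)).eval 0) = b := by
      rw [hbb]; funext i
      rw [SepAux.PX2_eval, SepAux.xv2_zero]
    have hN1 : (fun j : Fin (2*m+1) => (SepAux.PY1 k m (j:ℕ)).eval 0) = negb := by
      funext j
      rw [SepAux.PY1_eval, SepAux.yv1_zero k m (j:ℕ) hodd]
    have hN2 : (fun j : Fin (2*m+1) => (SepAux.PY2 k m (j:ℕ)).eval 0) = negb := by
      funext j
      rw [SepAux.PY2_eval, SepAux.yv2_zero k m (j:ℕ) hodd]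
    rw [hA, hN1] at hc1
    rw [hB, hN2] at hc2
    rw [hc1, hc2]
  · -- (a, b) is not on the graph
    rintro ⟨t, ht⟩
    have haz : a = fun i : Fin (2*m+1) => (fun n : ℕ => if n = m then (1:k) else 0) (i:ℕ) := by
      rw [haa]
    have hsum : ∀ (jj : Fin (2*m+1)), m ≤ (jj:ℕ) →
        gaAct k (2*m) t a jj = t^((jj:ℕ)-m) / (((jj:ℕ)-m).factorial : k) := by
      intro jj hjj
      rw [haz, SepAux.gaAct_apply k m t (fun n : ℕ => if n = m then (1:k) else 0) jj]
      have : ∀ i ∈ Finset.range ((jj:ℕ)+1),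
          t^((jj:ℕ)-i) / (((jj:ℕ)-i).factorial : k) * (if i = m then (1:k) else 0)
            = if i = m then t^((jj:ℕ)-i) / (((jj:ℕ)-i).factorial : k) else 0 := by
        intro i _
        by_cases h : i = m <;> simp [h]
      rw [Finset.sum_congr rfl this,
        Finset.sum_ite_eq' (Finset.range ((jj:ℕ)+1)) m
          (fun i => t^((jj:ℕ)-i) / (((jj:ℕ)-i).factorial : k)),
        if_pos (by simp; omega)]
    have h1 := congrFun ht ⟨m+1, by omega⟩
    have h2 := congrFun ht ⟨m+2, by omega⟩
    rw [hsum ⟨m+1, by omega⟩ (by simp)] at h1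
    rw [hsum ⟨m+2, by omega⟩ (by simp)] at h2
    rw [hbb] at h1 h2
    simp only [show ((⟨m+1, by omega⟩ : Fin (2*m+1)) : ℕ) = m+1 from rfl,
      show ((⟨m+2, by omega⟩ : Fin (2*m+1)) : ℕ) = m+2 from rfl] at h1 h2
    rw [show m+1-m = 1 by omega] at h1
    rw [show m+2-m = 2 by omega] at h2
    simp [Nat.factorial] at h1 h2
    -- h1 : t = 1, h2 : t^2 / 2 = 0 (shapes to be fixed)
    rw [h1] at h2
    norm_num at h2
  · -- b_m ≠ (-1)^m a_m
    rw [haa, hbb, hodd.neg_one_pow]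
    simp only [show ((⟨m, by omega⟩ : Fin (2*m+1)) : ℕ) = m from rfl]
    simp only [if_pos rfl, if_neg (show m ≠ m + 1 by omega)]
    intro hcon
    simp only [if_true, add_zero] at hcon
    norm_num at hcon
end

section
/- Let D be a locally nilpotent derivation on the coordinate ring k[X] of an irreducible affine variety X over an algebraically closed field k of characteristic zero, inducing a G_a-action on X. Suppose s ∈ k[X] is a local slice, i.e., Ds ≠ 0 and D²s = 0, and suppose x, y ∈ X satisfy f(x) = f(y) for all f ∈ ker D, and Ds(x) ≠ 0. Then x and y lie in the same G_a-orbit. -/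
set_option linter.unusedSectionVars false

section Aux
variable {k R : Type*} [Field k] [CharZero k] [CommRing R] [Algebra k R]
variable (D : Derivation k R R)

lemma auxIt_zero (i : ℕ) : (⇑D)^[i] (0 : R) = 0 :=
  Function.iterate_fixed (map_zero D) i

lemma auxIt_add (i : ℕ) (f g : R) : (⇑D)^[i] (f + g) = (⇑D)^[i] f + (⇑D)^[i] g := by
  induction i with
  | zero => simp
  | succ i ih => simp [Function.iterate_succ_apply', ih]

lemma auxIt_sub (i : ℕ) (f g : R) : (⇑D)^[i] (f - g) = (⇑D)^[i] f - (⇑D)^[i] g := by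
  induction i with
  | zero => simp
  | succ i ih => simp [Function.iterate_succ_apply', ih]

lemma auxIt_ker_mul {c : R} (hc : D c = 0) (i : ℕ) (g : R) :
    (⇑D)^[i] (c * g) = c * (⇑D)^[i] g := by
  induction i with
  | zero => simp
  | succ i ih =>
      rw [Function.iterate_succ_apply', Function.iterate_succ_apply', ih,
        Derivation.leibniz, hc, smul_zero, add_zero, smul_eq_mul]

lemma auxIt_nsmul (i : ℕ) (n : ℕ) (g : R) :
    (⇑D)^[i] (n • g) = n • (⇑D)^[i] g := by
  have hn : D ((n : ℕ) : R) = 0 := D.map_natCast n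
  rw [nsmul_eq_mul, nsmul_eq_mul, auxIt_ker_mul D hn]

lemma auxIt_stable {f : R} {N : ℕ} (hN : (⇑D)^[N] f = 0) {i : ℕ} (hi : N ≤ i) :
    (⇑D)^[i] f = 0 := by
  obtain ⟨j, rfl⟩ := Nat.exists_eq_add_of_le hi
  rw [add_comm, Function.iterate_add_apply, hN, auxIt_zero]

lemma auxKer_mul {u v : R} (hu : D u = 0) (hv : D v = 0) : D (u * v) = 0 := by
  rw [Derivation.leibniz, hu, hv, smul_zero, smul_zero, add_zero]

lemma auxKer_pow {u : R} (hu : D u = 0) (m : ℕ) : D (u ^ m) = 0 := by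
  rw [Derivation.leibniz_pow, hu, smul_zero, smul_zero]

lemma auxIt_spow (s : R) (hs2 : D (D s) = 0) :
    ∀ (i n : ℕ), (⇑D)^[i] (s ^ n)
      = (n.choose i * i.factorial) • ((D s) ^ i * s ^ (n - i)) := by
  intro i
  induction i with
  | zero => intro n; simp
  | succ i ih =>
      intro n
      cases n with
      | zero =>
          rw [pow_zero, Function.iterate_succ_apply, Derivation.map_one_eq_zero, auxIt_zero]
          rw [Nat.choose_eq_zero_of_lt (Nat.succ_pos i), zero_mul, zero_smul]
      | succ m =>
          have hds : D (s ^ (m + 1)) = (m + 1) • (D s * s ^ m) := by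
            rw [Derivation.leibniz_pow]
            simp [smul_eq_mul, mul_comm]
          have hco : (m + 1) * (m.choose i * i.factorial)
              = (m + 1).choose (i + 1) * (i + 1).factorial := by
            rw [← mul_assoc, Nat.add_one_mul_choose_eq, Nat.factorial_succ, mul_assoc]
          rw [Function.iterate_succ_apply, hds, auxIt_nsmul,
            auxIt_ker_mul D hs2, ih m, mul_smul_comm, smul_smul, Nat.succ_sub_succ,
            hco, pow_succ]
          congr 1
          ring

lemma auxA (s : R) (hs2 : D (D s) = 0) :
    ∀ (n : ℕ) (f : R), (⇑D)^[n] f = 0 →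
      ∃ (m nn : ℕ) (c : ℕ → R), (∀ i, D (c i) = 0) ∧
        (D s) ^ m * f = ∑ i ∈ Finset.range nn, c i * s ^ i := by
  intro n
  induction n with
  | zero =>
      intro f hf
      refine ⟨0, 0, 0, by simp, ?_⟩
      simp at hf
      simp [hf]
  | succ n ih =>
      intro f hf
      set a := D s with ha
      set c0 : R := ((n.factorial : k)⁻¹) • (⇑D)^[n] f with hc0
      have hdc0 : D c0 = 0 := by
        have h' : D ((⇑D)^[n] f) = (⇑D)^[n + 1] f :=
          (Function.iterate_succ_apply' (⇑D) n f).symm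
        rw [hc0, Derivation.map_smul, h', hf, smul_zero]
      have hka : D a = 0 := hs2
      have hkey : (⇑D)^[n] (a ^ n * f - c0 * s ^ n) = 0 := by
        rw [auxIt_sub, auxIt_ker_mul D (auxKer_pow D hka n), auxIt_ker_mul D hdc0,
          auxIt_spow D s hs2, Nat.choose_self, one_mul, Nat.sub_self, pow_zero, mul_one]
        rw [hc0, ← Nat.cast_smul_eq_nsmul k, smul_mul_assoc, mul_smul_comm, smul_smul,
          inv_mul_cancel₀ (by exact_mod_cast Nat.factorial_ne_zero n), one_smul]
        rw [← ha]
        ring_nf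
      obtain ⟨m, nn, c, hc, heq⟩ := ih _ hkey
      refine ⟨m + n, max nn (n + 1),
        (fun i => (if i < nn then c i else 0) + (if i = n then a ^ m * c0 else 0)), ?_, ?_⟩
      · intro i
        rw [map_add]
        have h1 : D (if i < nn then c i else 0) = 0 := by split <;> simp [hc]
        have h2 : D (if i = n then a ^ m * c0 else 0) = 0 := by
          split
          · exact auxKer_mul D (auxKer_pow D hka m) hdc0
          · simp
        rw [h1, h2, add_zero]
      · have expand : a ^ (m + n) * f
            = a ^ m * (a ^ n * f - c0 * s ^ n) + (a ^ m * c0) * s ^ n := by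
          rw [pow_add]; ring
        rw [expand, heq]
        have hleft : (∑ i ∈ Finset.range (max nn (n + 1)),
            (if i < nn then c i else 0) * s ^ i) = ∑ i ∈ Finset.range nn, c i * s ^ i := by
          rw [← Finset.sum_subset (Finset.range_subset_range.2 (le_max_left nn (n + 1)))
              (fun i _ hi => by rw [if_neg (by simpa using hi), zero_mul])]
          exact Finset.sum_congr rfl fun i hi => by rw [if_pos (Finset.mem_range.1 hi)]
        have hright : (∑ i ∈ Finset.range (max nn (n + 1)),
            (if i = n then a ^ m * c0 else 0) * s ^ i) = a ^ m * c0 * s ^ n := by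
          have h1 : ∀ i, (if i = n then a ^ m * c0 else 0) * s ^ i
              = if i = n then (a ^ m * c0) * s ^ i else 0 := fun i => by
            split <;> simp
          simp only [h1]
          rw [Finset.sum_ite_eq' (Finset.range (max nn (n + 1))) n
            (fun i => (a ^ m * c0) * s ^ i),
            if_pos (Finset.mem_range.2 (lt_of_lt_of_le (Nat.lt_succ_self n)
              (le_max_right nn (n + 1))))]
        simp only [add_mul]
        rw [Finset.sum_add_distrib, hleft, hright]

end Aux


/-- Proposition 2.1: Let `D` be a locally nilpotent derivation on the coordinate ring
`R = k[X]` of an irreducible affine variety `X` (`R` an integral domain, finitely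
generated over `k` algebraically closed of characteristic zero), inducing a
`G_a`-action whose orbit map on points (`k`-algebra homomorphisms `R →ₐ[k] k`) is
`(t * x)(f) = ∑ᵢ tⁱ/i! · x(Dⁱ f)`.  If `s` is a local slice (`Ds ≠ 0`, `D²s = 0`),
and `x, y` agree on all invariants (`ker D`) with `(Ds)(x) ≠ 0`, then `x` and `y`
lie in the same orbit. -/
theorem local_slice_orbit_separation (k : Type*) [Field k] [IsAlgClosed k] [CharZero k]
    (R : Type*) [CommRing R] [IsDomain R] [Algebra k R] [Algebra.FiniteType k R]
    (D : Derivation k R R)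
    (hln : ∀ f : R, ∃ N : ℕ, (⇑D)^[N] f = 0)
    (s : R) (hs1 : D s ≠ 0) (hs2 : D (D s) = 0)
    (x y : R →ₐ[k] k)
    (hsep : ∀ f : R, D f = 0 → x f = y f)
    (hx : x (D s) ≠ 0) :
    ∃ t : k, ∀ f : R,
      y f = ∑ᶠ i : ℕ, t ^ i / (i.factorial : k) * x ((⇑D)^[i] f) := by
  obtain ⟨t, hys⟩ : ∃ t : k, y s = t * x (D s) + x s :=
    ⟨(y s - x s) / x (D s), by rw [div_mul_cancel₀ _ hx]; ring⟩
  refine ⟨t, fun f => ?_⟩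
  -- support finiteness
  have hfin : ∀ g : R,
      (Function.support fun i : ℕ => t ^ i / (i.factorial : k) * x ((⇑D)^[i] g)).Finite := by
    intro g
    obtain ⟨N, hN⟩ := hln g
    apply Set.Finite.subset (Finset.range N).finite_toSet
    intro i hi
    simp only [Function.mem_support] at hi
    simp only [Finset.coe_range, Set.mem_Iio]
    by_contra h
    exact hi (by rw [auxIt_stable D hN (le_of_not_gt h), map_zero, mul_zero])
  -- finsum as finite sum
  have hφeq : ∀ (g : R) (N : ℕ), (⇑D)^[N] g = 0 →
      (∑ᶠ i : ℕ, t ^ i / (i.factorial : k) * x ((⇑D)^[i] g))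
        = ∑ i ∈ Finset.range N, t ^ i / (i.factorial : k) * x ((⇑D)^[i] g) := by
    intro g N hN
    apply finsum_eq_sum_of_support_subset
    intro i hi
    simp only [Function.mem_support] at hi
    simp only [Finset.coe_range, Set.mem_Iio]
    by_contra h
    exact hi (by rw [auxIt_stable D hN (le_of_not_gt h), map_zero, mul_zero])
  -- additivity
  have hφadd : ∀ g h : R,
      (∑ᶠ i : ℕ, t ^ i / (i.factorial : k) * x ((⇑D)^[i] (g + h)))
        = (∑ᶠ i : ℕ, t ^ i / (i.factorial : k) * x ((⇑D)^[i] g))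
          + ∑ᶠ i : ℕ, t ^ i / (i.factorial : k) * x ((⇑D)^[i] h) := by
    intro g h
    obtain ⟨Ng, hNg⟩ := hln g
    obtain ⟨Nh, hNh⟩ := hln h
    have hg' := auxIt_stable D hNg (le_max_left Ng Nh)
    have hh' := auxIt_stable D hNh (le_max_right Ng Nh)
    rw [hφeq g _ hg', hφeq h _ hh',
      hφeq (g + h) (max Ng Nh) (by rw [auxIt_add, hg', hh', add_zero]),
      ← Finset.sum_add_distrib]
    exact Finset.sum_congr rfl fun i _ => by rw [auxIt_add, map_add, mul_add]
  -- zero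
  have hφzero : (∑ᶠ i : ℕ, t ^ i / (i.factorial : k) * x ((⇑D)^[i] (0 : R))) = 0 := by
    rw [finsum_congr fun i => by rw [auxIt_zero, map_zero, mul_zero]]
    exact finsum_zero
  -- kernel elements pull out
  have hφker : ∀ (u g : R), D u = 0 →
      (∑ᶠ i : ℕ, t ^ i / (i.factorial : k) * x ((⇑D)^[i] (u * g)))
        = x u * ∑ᶠ i : ℕ, t ^ i / (i.factorial : k) * x ((⇑D)^[i] g) := by
    intro u g hu
    rw [finsum_congr fun i => by
      rw [auxIt_ker_mul D hu, map_mul, mul_left_comm], ← mul_finsum]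
  -- powers of s
  have hφs : ∀ m : ℕ,
      (∑ᶠ i : ℕ, t ^ i / (i.factorial : k) * x ((⇑D)^[i] (s ^ m))) = (y s) ^ m := by
    intro m
    have h0 : (⇑D)^[m + 1] (s ^ m) = 0 := by
      rw [auxIt_spow D s hs2, Nat.choose_eq_zero_of_lt (Nat.lt_succ_self m), zero_mul,
        zero_smul]
    rw [hφeq _ _ h0, hys, add_pow]
    apply Finset.sum_congr rfl
    intro i _
    have hfac : (i.factorial : k) ≠ 0 := Nat.cast_ne_zero.mpr i.factorial_ne_zero
    rw [auxIt_spow D s hs2, map_nsmul, map_mul, map_pow, nsmul_eq_mul, Nat.cast_mul,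
      map_pow]
    field_simp
    ring
  -- finite sums
  have hφsum : ∀ (u : Finset ℕ) (g : ℕ → R),
      (∑ᶠ i : ℕ, t ^ i / (i.factorial : k) * x ((⇑D)^[i] (∑ j ∈ u, g j)))
        = ∑ j ∈ u, ∑ᶠ i : ℕ, t ^ i / (i.factorial : k) * x ((⇑D)^[i] (g j)) := by
    intro u g
    induction u using Finset.induction_on with
    | empty => simpa using hφzero
    | insert _ _ hj ih =>
        rw [Finset.sum_insert hj, hφadd, ih, Finset.sum_insert hj]
  -- main computation
  obtain ⟨N, hN⟩ := hln f
  obtain ⟨m, nn, c, hc, heq⟩ := auxA D s hs2 N f hN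
  have hxa : x (D s) ^ m ≠ 0 := pow_ne_zero m hx
  have hDpow : D ((D s) ^ m) = 0 := auxKer_pow D hs2 m
  have e1 : (∑ᶠ i : ℕ, t ^ i / (i.factorial : k) * x ((⇑D)^[i] ((D s) ^ m * f)))
      = x (D s) ^ m * ∑ᶠ i : ℕ, t ^ i / (i.factorial : k) * x ((⇑D)^[i] f) := by
    rw [hφker _ f hDpow, map_pow]
  have e2 : (∑ᶠ i : ℕ, t ^ i / (i.factorial : k) * x ((⇑D)^[i] ((D s) ^ m * f)))
      = ∑ j ∈ Finset.range nn, x (c j) * (y s) ^ j := by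
    rw [heq, hφsum]
    exact Finset.sum_congr rfl fun j _ => by rw [hφker _ _ (hc j), hφs]
  have e3 : x (D s) ^ m * y f = ∑ j ∈ Finset.range nn, x (c j) * (y s) ^ j := by
    have : y ((D s) ^ m * f) = ∑ j ∈ Finset.range nn, x (c j) * (y s) ^ j := by
      rw [heq, map_sum]
      exact Finset.sum_congr rfl fun j _ => by
        rw [map_mul, map_pow, hsep (c j) (hc j)]
    rw [← this, map_mul, map_pow, hsep (D s) hs2]
  apply mul_left_cancel₀ hxa
  rw [e3, ← e1, e2]
end
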